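/- arXiv:1804.09752 — 6 statements merged into one kernel-verified Lean document; each statement's English description precedes it below -/
import Mathlib

section
/- In the example instance, the explicitly given point P lies in the polytope Q: P satisfies the initial conditions, all flow-conservation equations for the CY- and B-variables, all linking equations between the CY-, B- and DY-variables, and every coordinate of P lies in the interval [0,1]. -/
open Finset

/-- A point of the LP relaxation: `CY t d h1 h2`, `B t g1 g2`, `DY t d h g`,
with times in `Fin (T+1)`, dike heights in `Fin n`, barrier heights in `Fin m`. -/
structure DikePoint (T n m : ℕ) (D : Type) where
  CY : Fin (T + 1) → D → Fin n → Fin n → ℝ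
  B : Fin (T + 1) → Fin m → Fin m → ℝ
  DY : Fin (T + 1) → D → Fin n → Fin m → ℝ

/-- Membership in the polytope `Q`: box constraints, support only on
nondecreasing height pairs, initial conditions, flow conservation, and the
linking constraints. -/
def memQ {T n m : ℕ} {D : Type} [Fintype D] [NeZero n] [NeZero m]
    (x : DikePoint T n m D) : Prop :=
  (∀ t d h1 h2, x.CY t d h1 h2 ∈ Set.Icc (0 : ℝ) 1) ∧
  (∀ t g1 g2, x.B t g1 g2 ∈ Set.Icc (0 : ℝ) 1) ∧
  (∀ t d h g, x.DY t d h g ∈ Set.Icc (0 : ℝ) 1) ∧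
  (∀ t d h1 h2, ¬ h1 ≤ h2 → x.CY t d h1 h2 = 0) ∧
  (∀ t g1 g2, ¬ g1 ≤ g2 → x.B t g1 g2 = 0) ∧
  (∀ d, x.CY 0 d 0 0 = 1) ∧
  (∀ d h1 h2, 0 < h2 → x.CY 0 d h1 h2 = 0) ∧
  (x.B 0 0 0 = 1) ∧
  (∀ g1 g2, 0 < g2 → x.B 0 g1 g2 = 0) ∧
  (∀ (t : Fin T) (d : D) (h : Fin n),
    ∑ h1 ∈ Iic h, x.CY t.castSucc d h1 h = ∑ h3 ∈ Ici h, x.CY t.succ d h h3) ∧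
  (∀ t d (h : Fin n), ∑ h1 ∈ Iic h, x.CY t d h1 h = ∑ g : Fin m, x.DY t d h g) ∧
  (∀ (t : Fin T) (g : Fin m),
    ∑ g1 ∈ Iic g, x.B t.castSucc g1 g = ∑ g3 ∈ Ici g, x.B t.succ g g3) ∧
  (∀ t (d : D) (g : Fin m), ∑ g1 ∈ Iic g, x.B t g1 g = ∑ h : Fin n, x.DY t d h g)

/-- A point is integral if every coordinate is `0` or `1`. -/
def isIntegral {T n m : ℕ} {D : Type} (x : DikePoint T n m D) : Prop :=
  (∀ t d h1 h2, x.CY t d h1 h2 = 0 ∨ x.CY t d h1 h2 = 1) ∧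
  (∀ t g1 g2, x.B t g1 g2 = 0 ∨ x.B t g1 g2 = 1) ∧
  (∀ t d h g, x.DY t d h g = 0 ∨ x.DY t d h g = 1)

/-- The linear objective function of the LP relaxation. -/
def obj {T n m : ℕ} {D : Type} [Fintype D]
    (Dcost : Fin (T + 1) → D → Fin n → Fin n → ℝ)
    (Dexp : Fin (T + 1) → D → Fin n → Fin m → ℝ)
    (Bcost : Fin (T + 1) → Fin m → Fin m → ℝ)
    (Bexp : Fin (T + 1) → Fin m → ℝ)
    (x : DikePoint T n m D) : ℝ :=
  (∑ t, ∑ d, ∑ h2, ∑ h1 ∈ Iic h2, Dcost t d h1 h2 * x.CY t d h1 h2) +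
  (∑ t, ∑ d, ∑ h, ∑ g, Dexp t d h g * x.DY t d h g) +
  (∑ t, ∑ g2, ∑ g1 ∈ Iic g2, (Bcost t g1 g2 + Bexp t g2) * x.B t g1 g2)

/-- Condition (i). -/
def condI {T n m : ℕ} {D : Type}
    (Dexp : Fin (T + 1) → D → Fin n → Fin m → ℝ) : Prop :=
  ∀ (t : Fin (T + 1)) (d : D) (h h' : Fin n) (g g' : Fin m), h ≤ h' → g ≤ g' →
    Dexp t d h g + Dexp t d h' g' ≤ Dexp t d h' g + Dexp t d h g'

/-- Condition (ii). -/
def condII {T m : ℕ}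
    (Bcost : Fin (T + 1) → Fin m → Fin m → ℝ) : Prop :=
  ∀ (t : Fin (T + 1)) (g1 g1' g2 g2' : Fin m), g1 ≤ g1' → g1' ≤ g2 → g2 ≤ g2' →
    Bcost t g1 g2 + Bcost t g1' g2' ≤ Bcost t g1 g2' + Bcost t g1' g2

/-- Condition (iii). -/
def condIII {T n : ℕ} {D : Type}
    (Dcost : Fin (T + 1) → D → Fin n → Fin n → ℝ) : Prop :=
  ∀ (t : Fin (T + 1)) (d : D) (h1 h1' h2 h2' : Fin n), h1 ≤ h1' → h1' ≤ h2 → h2 ≤ h2' →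
    Dcost t d h1 h2 + Dcost t d h1' h2' ≤ Dcost t d h1 h2' + Dcost t d h1' h2

/-- The example point `P` (example instance: `T = 2`, one dike segment,
two dike heights, two barrier heights). -/
noncomputable def P : DikePoint 2 2 2 Unit where
  CY := fun t _ h1 h2 =>
    if t = 0 then (if h1 = 0 ∧ h2 = 0 then 1 else 0)
    else if t = 1 then (if h1 = 0 then 1 / 2 else 0)
    else (if h1 = h2 then 1 / 2 else 0)
  B := fun t g1 g2 =>
    if t = 0 then (if g1 = 0 ∧ g2 = 0 then 1 else 0)
    else if t = 1 then (if g1 = 0 then 1 / 2 else 0)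
    else (if g1 = g2 then 1 / 2 else 0)
  DY := fun t _ h g =>
    if t = 0 then (if h = 0 ∧ g = 0 then 1 else 0)
    else if t = 1 then (if h ≠ g then 1 / 2 else 0)
    else (if h = g then 1 / 2 else 0)

/-- the point `P` lies in the polytope `Q`. -/
theorem statement_0 : memQ P := by
  have e1 : Finset.Iic (0:Fin 2) = {0} := rfl
  have e2 : Finset.Iic (1:Fin 2) = {0,1} := rfl
  have e3 : Finset.Ici (0:Fin 2) = {0,1} := rfl
  have e4 : Finset.Ici (1:Fin 2) = {1} := rfl
  refine ⟨?_, ?_, ?_, ?_, ?_, ?_, ?_, ?_, ?_, ?_, ?_, ?_, ?_⟩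
  · intro t d h1 h2
    fin_cases t <;> fin_cases h1 <;> fin_cases h2 <;> simp [P] <;> norm_num
  · intro t g1 g2
    fin_cases t <;> fin_cases g1 <;> fin_cases g2 <;> simp [P] <;> norm_num
  · intro t d h g
    fin_cases t <;> fin_cases h <;> fin_cases g <;> simp [P] <;> norm_num
  · intro t d h1 h2 hle
    fin_cases t <;> fin_cases h1 <;> fin_cases h2 <;> simp_all [P]
  · intro t g1 g2 hle
    fin_cases t <;> fin_cases g1 <;> fin_cases g2 <;> simp_all [P]
  · intro d; simp [P]
  · intro d h1 h2 hp
    fin_cases h1 <;> fin_cases h2 <;> simp_all [P]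
  · simp [P]
  · intro g1 g2 hp
    fin_cases g1 <;> fin_cases g2 <;> simp_all [P]
  · intro t d h
    fin_cases t <;> fin_cases h <;> simp [P, e1, e2, e3, e4]
  · intro t d h
    fin_cases t <;> fin_cases h <;> simp [P, Fin.sum_univ_two, e1, e2]
  · intro t g
    fin_cases t <;> fin_cases g <;> simp [P, e1, e2, e3, e4]
  · intro t d g
    fin_cases t <;> fin_cases g <;> simp [P, Fin.sum_univ_two, e1, e2]
end

section
/- In the example instance, the point P is an extreme point of the polytope Q: whenever y, z ∈ Q satisfy P = (y+z)/2, then y = z. Equivalently, there is no nonzero direction vector v such that both P + εv and P − εv lie in Q for some ε > 0. -/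
open Finset

set_option maxHeartbeats 2000000 in
lemma pinned (x : DikePoint 2 2 2 Unit) (hx : memQ x)
    (hC : ∀ t h1 h2, P.CY t () h1 h2 = 0 → x.CY t () h1 h2 = 0)
    (hB : ∀ t g1 g2, P.B t g1 g2 = 0 → x.B t g1 g2 = 0)
    (hD : ∀ t h g, P.DY t () h g = 0 → x.DY t () h g = 0) :
    x = P := by
  obtain ⟨_, _, _, _, _, hCY0, _, hB00, _, hCYflow, hlinkC, hBflow, hlinkB⟩ := hx
  have iic0 : Iic (0 : Fin 2) = {0} := by decide
  have iic1 : Iic (1 : Fin 2) = ({0, 1} : Finset (Fin 2)) := by decide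
  have ici0 : Ici (0 : Fin 2) = ({0, 1} : Finset (Fin 2)) := by decide
  have ici1 : Ici (1 : Fin 2) = ({1} : Finset (Fin 2)) := by decide
  have cs0 : (0 : Fin 2).castSucc = (0 : Fin 3) := rfl
  have cs1 : (1 : Fin 2).castSucc = (1 : Fin 3) := rfl
  have s0 : (0 : Fin 2).succ = (1 : Fin 3) := rfl
  have s1 : (1 : Fin 2).succ = (2 : Fin 3) := rfl
  -- zero coordinates
  have zc01 : x.CY 0 () 0 1 = 0 := hC _ _ _ (by norm_num [P, show (2 : Fin 3) ≠ 0 by decide, show (2 : Fin 3) ≠ 1 by decide])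
  have zc010 : x.CY 0 () 1 0 = 0 := hC _ _ _ (by norm_num [P, show (2 : Fin 3) ≠ 0 by decide, show (2 : Fin 3) ≠ 1 by decide])
  have zc011 : x.CY 0 () 1 1 = 0 := hC _ _ _ (by norm_num [P, show (2 : Fin 3) ≠ 0 by decide, show (2 : Fin 3) ≠ 1 by decide])
  have zc110 : x.CY 1 () 1 0 = 0 := hC _ _ _ (by norm_num [P, show (2 : Fin 3) ≠ 0 by decide, show (2 : Fin 3) ≠ 1 by decide])
  have zc111 : x.CY 1 () 1 1 = 0 := hC _ _ _ (by norm_num [P, show (2 : Fin 3) ≠ 0 by decide, show (2 : Fin 3) ≠ 1 by decide])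
  have zc201 : x.CY 2 () 0 1 = 0 := hC _ _ _ (by norm_num [P, show (2 : Fin 3) ≠ 0 by decide, show (2 : Fin 3) ≠ 1 by decide])
  have zc210 : x.CY 2 () 1 0 = 0 := hC _ _ _ (by norm_num [P, show (2 : Fin 3) ≠ 0 by decide, show (2 : Fin 3) ≠ 1 by decide])
  have zb001 : x.B 0 0 1 = 0 := hB _ _ _ (by norm_num [P, show (2 : Fin 3) ≠ 0 by decide, show (2 : Fin 3) ≠ 1 by decide])
  have zb010 : x.B 0 1 0 = 0 := hB _ _ _ (by norm_num [P, show (2 : Fin 3) ≠ 0 by decide, show (2 : Fin 3) ≠ 1 by decide])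
  have zb011 : x.B 0 1 1 = 0 := hB _ _ _ (by norm_num [P, show (2 : Fin 3) ≠ 0 by decide, show (2 : Fin 3) ≠ 1 by decide])
  have zb110 : x.B 1 1 0 = 0 := hB _ _ _ (by norm_num [P, show (2 : Fin 3) ≠ 0 by decide, show (2 : Fin 3) ≠ 1 by decide])
  have zb111 : x.B 1 1 1 = 0 := hB _ _ _ (by norm_num [P, show (2 : Fin 3) ≠ 0 by decide, show (2 : Fin 3) ≠ 1 by decide])
  have zb201 : x.B 2 0 1 = 0 := hB _ _ _ (by norm_num [P, show (2 : Fin 3) ≠ 0 by decide, show (2 : Fin 3) ≠ 1 by decide])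
  have zb210 : x.B 2 1 0 = 0 := hB _ _ _ (by norm_num [P, show (2 : Fin 3) ≠ 0 by decide, show (2 : Fin 3) ≠ 1 by decide])
  have zd001 : x.DY 0 () 0 1 = 0 := hD _ _ _ (by norm_num [P, show (2 : Fin 3) ≠ 0 by decide, show (2 : Fin 3) ≠ 1 by decide])
  have zd010 : x.DY 0 () 1 0 = 0 := hD _ _ _ (by norm_num [P, show (2 : Fin 3) ≠ 0 by decide, show (2 : Fin 3) ≠ 1 by decide])
  have zd011 : x.DY 0 () 1 1 = 0 := hD _ _ _ (by norm_num [P, show (2 : Fin 3) ≠ 0 by decide, show (2 : Fin 3) ≠ 1 by decide])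
  have zd100 : x.DY 1 () 0 0 = 0 := hD _ _ _ (by norm_num [P, show (2 : Fin 3) ≠ 0 by decide, show (2 : Fin 3) ≠ 1 by decide])
  have zd111 : x.DY 1 () 1 1 = 0 := hD _ _ _ (by norm_num [P, show (2 : Fin 3) ≠ 0 by decide, show (2 : Fin 3) ≠ 1 by decide])
  have zd201 : x.DY 2 () 0 1 = 0 := hD _ _ _ (by norm_num [P, show (2 : Fin 3) ≠ 0 by decide, show (2 : Fin 3) ≠ 1 by decide])
  have zd210 : x.DY 2 () 1 0 = 0 := hD _ _ _ (by norm_num [P, show (2 : Fin 3) ≠ 0 by decide, show (2 : Fin 3) ≠ 1 by decide])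
  -- flow / link equations
  have E1 := hCYflow 0 () 0
  rw [iic0, ici0, Finset.sum_singleton, Finset.sum_pair (by decide), cs0, s0,
    hCY0 ()] at E1
  have E2 := hCYflow 1 () 0
  rw [iic0, ici0, Finset.sum_singleton, Finset.sum_pair (by decide), cs1, s1] at E2
  have E3 := hCYflow 1 () 1
  rw [iic1, ici1, Finset.sum_singleton, Finset.sum_pair (by decide), cs1, s1] at E3
  have L1 := hlinkC 1 () 0
  rw [iic0, Finset.sum_singleton, Fin.sum_univ_two] at L1
  have L2 := hlinkC 1 () 1
  rw [iic1, Finset.sum_pair (by decide), Fin.sum_univ_two] at L2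
  have L3 := hlinkC 2 () 0
  rw [iic0, Finset.sum_singleton, Fin.sum_univ_two] at L3
  have L4 := hlinkC 2 () 1
  rw [iic1, Finset.sum_pair (by decide), Fin.sum_univ_two] at L4
  have F0 := hBflow 0 0
  rw [iic0, ici0, Finset.sum_singleton, Finset.sum_pair (by decide), cs0, s0, hB00] at F0
  have F1 := hBflow 1 0
  rw [iic0, ici0, Finset.sum_singleton, Finset.sum_pair (by decide), cs1, s1] at F1
  have F2 := hBflow 1 1
  rw [iic1, ici1, Finset.sum_singleton, Finset.sum_pair (by decide), cs1, s1] at F2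
  have M1 := hlinkB 1 () 0
  rw [iic0, Finset.sum_singleton, Fin.sum_univ_two] at M1
  have M2 := hlinkB 1 () 1
  rw [iic1, Finset.sum_pair (by decide), Fin.sum_univ_two] at M2
  have M3 := hlinkB 2 () 0
  rw [iic0, Finset.sum_singleton, Fin.sum_univ_two] at M3
  -- pinned values
  have va : x.CY 1 () 0 0 = 1 / 2 := by linarith
  have vb : x.CY 1 () 0 1 = 1 / 2 := by linarith
  have vc : x.CY 2 () 0 0 = 1 / 2 := by linarith
  have ve : x.CY 2 () 1 1 = 1 / 2 := by linarith
  have vp : x.B 1 0 0 = 1 / 2 := by linarith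
  have vq : x.B 1 0 1 = 1 / 2 := by linarith
  have vr : x.B 2 0 0 = 1 / 2 := by linarith
  have vs' : x.B 2 1 1 = 1 / 2 := by linarith
  have vu : x.DY 1 () 0 1 = 1 / 2 := by linarith
  have vv : x.DY 1 () 1 0 = 1 / 2 := by linarith
  have vw : x.DY 2 () 0 0 = 1 / 2 := by linarith
  have vX : x.DY 2 () 1 1 = 1 / 2 := by linarith
  have vd0 : x.DY 0 () 0 0 = 1 := by
    have L0 := hlinkC 0 () 0
    rw [iic0, Finset.sum_singleton, Fin.sum_univ_two, hCY0 ()] at L0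
    linarith
  have hc00 : x.CY 0 () 0 0 = 1 := hCY0 ()
  have fin3c : ∀ (p : Fin 3 → Prop), p 0 → p 1 → p 2 → ∀ t, p t := by
    intro p h0 h1 h2 t
    match t with
    | ⟨0, _⟩ => exact h0
    | ⟨1, _⟩ => exact h1
    | ⟨2, _⟩ => exact h2
  have fin2p : ∀ (p : Fin 2 → Fin 2 → Prop), p 0 0 → p 0 1 → p 1 0 → p 1 1 →
      ∀ a b, p a b := by
    intro p h00 h01 h10 h11 a b
    match a, b with
    | ⟨0, _⟩, ⟨0, _⟩ => exact h00
    | ⟨0, _⟩, ⟨1, _⟩ => exact h01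
    | ⟨1, _⟩, ⟨0, _⟩ => exact h10
    | ⟨1, _⟩, ⟨1, _⟩ => exact h11
  have hCYeq : x.CY = P.CY := by
    funext t d h1 h2
    cases d
    revert h1 h2
    refine fin3c (fun t => ∀ h1 h2, x.CY t () h1 h2 = P.CY t () h1 h2) ?_ ?_ ?_ t <;>
      refine fin2p _ ?_ ?_ ?_ ?_ <;> norm_num [P, show (2 : Fin 3) ≠ 0 by decide, show (2 : Fin 3) ≠ 1 by decide] <;> linarith
  have hBeq : x.B = P.B := by
    funext t g1 g2
    revert g1 g2
    refine fin3c (fun t => ∀ g1 g2, x.B t g1 g2 = P.B t g1 g2) ?_ ?_ ?_ t <;>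
      refine fin2p _ ?_ ?_ ?_ ?_ <;> norm_num [P, show (2 : Fin 3) ≠ 0 by decide, show (2 : Fin 3) ≠ 1 by decide] <;> linarith
  have hDYeq : x.DY = P.DY := by
    funext t d h g
    cases d
    revert h g
    refine fin3c (fun t => ∀ h g, x.DY t () h g = P.DY t () h g) ?_ ?_ ?_ t <;>
      refine fin2p _ ?_ ?_ ?_ ?_ <;> norm_num [P, show (2 : Fin 3) ≠ 0 by decide, show (2 : Fin 3) ≠ 1 by decide] <;> linarith
  calc x = ⟨x.CY, x.B, x.DY⟩ := rfl
    _ = ⟨P.CY, P.B, P.DY⟩ := by rw [hCYeq, hBeq, hDYeq]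
    _ = P := rfl


/-- `P` is an extreme point of the polytope `Q`: whenever
`y, z ∈ Q` satisfy `P = (y + z) / 2` (coordinatewise), then `y = z`. -/
theorem statement_1 :
    ∀ y z : DikePoint 2 2 2 Unit, memQ y → memQ z →
      ((∀ t d h1 h2, P.CY t d h1 h2 = (y.CY t d h1 h2 + z.CY t d h1 h2) / 2) ∧
       (∀ t g1 g2, P.B t g1 g2 = (y.B t g1 g2 + z.B t g1 g2) / 2) ∧
       (∀ t d h g, P.DY t d h g = (y.DY t d h g + z.DY t d h g) / 2)) →
      y = z := by
  intro y z hy hz havg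
  obtain ⟨hAC, hAB, hAD⟩ := havg
  have hyC : ∀ t h1 h2, P.CY t () h1 h2 = 0 → y.CY t () h1 h2 = 0 := fun t h1 h2 h0 => by
    have a := (hy.1 t () h1 h2).1
    have b := (hz.1 t () h1 h2).1
    have c := hAC t () h1 h2
    linarith
  have hzC : ∀ t h1 h2, P.CY t () h1 h2 = 0 → z.CY t () h1 h2 = 0 := fun t h1 h2 h0 => by
    have a := (hy.1 t () h1 h2).1
    have b := (hz.1 t () h1 h2).1
    have c := hAC t () h1 h2
    linarith
  have hyB : ∀ t g1 g2, P.B t g1 g2 = 0 → y.B t g1 g2 = 0 := fun t g1 g2 h0 => by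
    have a := (hy.2.1 t g1 g2).1
    have b := (hz.2.1 t g1 g2).1
    have c := hAB t g1 g2
    linarith
  have hzB : ∀ t g1 g2, P.B t g1 g2 = 0 → z.B t g1 g2 = 0 := fun t g1 g2 h0 => by
    have a := (hy.2.1 t g1 g2).1
    have b := (hz.2.1 t g1 g2).1
    have c := hAB t g1 g2
    linarith
  have hyD : ∀ t h g, P.DY t () h g = 0 → y.DY t () h g = 0 := fun t h g h0 => by
    have a := (hy.2.2.1 t () h g).1
    have b := (hz.2.2.1 t () h g).1
    have c := hAD t () h g
    linarith
  have hzD : ∀ t h g, P.DY t () h g = 0 → z.DY t () h g = 0 := fun t h g h0 => by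
    have a := (hy.2.2.1 t () h g).1
    have b := (hz.2.2.1 t () h g).1
    have c := hAD t () h g
    linarith
  rw [pinned y hy hyC hyB hyD, pinned z hz hzC hzB hzD]
end

section
/- (Proposition 1.) Suppose the cost data satisfy conditions (i), (ii) and (iii). Then the LP relaxation has an integral optimal solution: there exists an integral point x* ∈ Q such that obj(x*) ≤ obj(y) for every y ∈ Q. -/
open Finset

set_option linter.unusedSectionVars false


namespace DikeAux

noncomputable def Psum (N M : ℕ) (f : ℕ → ℕ → ℝ) (a b : ℕ) : ℝ :=
  ∑ a' ∈ range N, ∑ b' ∈ range M, if a ≤ a' ∧ b ≤ b' then f a' b' else 0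

lemma Psum_zero_of_ge (N M : ℕ) (f : ℕ → ℕ → ℝ) (a b : ℕ) (h : N ≤ a ∨ M ≤ b) :
    Psum N M f a b = 0 := by
  refine Finset.sum_eq_zero fun a' ha' => Finset.sum_eq_zero fun b' hb' => ?_
  rw [if_neg]
  rintro ⟨h1, h2⟩
  simp only [mem_range] at ha' hb'
  omega

lemma Psum_row (N M : ℕ) (f : ℕ → ℕ → ℝ) (a : ℕ) (ha : a < N) :
    ∑ b ∈ range M, f a b = Psum N M f a 0 - Psum N M f (a+1) 0 := by
  unfold Psum
  rw [← Finset.sum_sub_distrib]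
  have h : ∀ a' ∈ range N,
      ((∑ b' ∈ range M, if a ≤ a' ∧ 0 ≤ b' then f a' b' else 0) -
        ∑ b' ∈ range M, if a + 1 ≤ a' ∧ 0 ≤ b' then f a' b' else 0)
      = if a' = a then ∑ b ∈ range M, f a' b else 0 := by
    intro a' _
    by_cases hc : a' = a
    · subst hc
      rw [if_pos rfl]
      have ez : (∑ b' ∈ range M, if a' + 1 ≤ a' ∧ 0 ≤ b' then f a' b' else 0) = 0 :=
        Finset.sum_eq_zero fun b' _ => if_neg (by omega)
      have ef : (∑ b' ∈ range M, if a' ≤ a' ∧ 0 ≤ b' then f a' b' else 0)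
          = ∑ b' ∈ range M, f a' b' :=
        Finset.sum_congr rfl fun b' _ => if_pos ⟨le_refl a', Nat.zero_le b'⟩
      rw [ez, ef, sub_zero]
    · rw [if_neg hc]
      rcases Nat.lt_or_ge a' a with hlt | hge
      · have ez1 : (∑ b' ∈ range M, if a ≤ a' ∧ 0 ≤ b' then f a' b' else 0) = 0 :=
          Finset.sum_eq_zero fun b' _ => if_neg (by omega)
        have ez2 : (∑ b' ∈ range M, if a + 1 ≤ a' ∧ 0 ≤ b' then f a' b' else 0) = 0 :=
          Finset.sum_eq_zero fun b' _ => if_neg (by omega)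
        rw [ez1, ez2, sub_zero]
      · have ef1 : (∑ b' ∈ range M, if a ≤ a' ∧ 0 ≤ b' then f a' b' else 0)
            = ∑ b' ∈ range M, f a' b' :=
          Finset.sum_congr rfl fun b' _ => if_pos ⟨hge, Nat.zero_le b'⟩
        have ef2 : (∑ b' ∈ range M, if a + 1 ≤ a' ∧ 0 ≤ b' then f a' b' else 0)
            = ∑ b' ∈ range M, f a' b' :=
          Finset.sum_congr rfl fun b' _ => if_pos ⟨by omega, Nat.zero_le b'⟩
        rw [ef1, ef2, sub_self]
  have e := Finset.sum_congr rfl h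
  rw [e, Finset.sum_ite_eq' (range N) a (fun a' => ∑ b ∈ range M, f a' b),
    if_pos (mem_range.mpr ha)]

lemma Psum_transpose (N M : ℕ) (f : ℕ → ℕ → ℝ) (a b : ℕ) :
    Psum N M f a b = Psum M N (fun x y => f y x) b a := by
  unfold Psum
  rw [Finset.sum_comm]
  exact Finset.sum_congr rfl fun b' _ => Finset.sum_congr rfl fun a' _ =>
    if_congr and_comm rfl rfl

lemma Psum_col (N M : ℕ) (f : ℕ → ℕ → ℝ) (b : ℕ) (hb : b < M) :
    ∑ a ∈ range N, f a b = Psum N M f 0 b - Psum N M f 0 (b+1) := by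
  rw [Psum_transpose N M f 0 b, Psum_transpose N M f 0 (b+1)]
  exact Psum_row M N (fun x y => f y x) b hb

lemma sum_ite_range (N a : ℕ) (ha : a ≤ N) (g : ℕ → ℝ) :
    ∑ i ∈ range N, (if i < a then g i else 0) = ∑ i ∈ range a, g i := by
  rw [← Finset.sum_subset (Finset.range_subset_range.mpr ha)
      (fun i _ hi => if_neg (by simpa using hi))]
  exact Finset.sum_congr rfl fun i hi => if_pos (mem_range.mp hi)

lemma tele2 (c : ℕ → ℕ → ℝ) (a b : ℕ) :
    ∑ i ∈ range a, ∑ j ∈ range b,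
      (c (i+1) (j+1) - c i (j+1) - c (i+1) j + c i j)
      = c a b - c a 0 - c 0 b + c 0 0 := by
  have h1 : ∀ i : ℕ, ∑ j ∈ range b, (c (i+1) (j+1) - c i (j+1) - c (i+1) j + c i j)
      = (c (i+1) b - c (i+1) 0) - (c i b - c i 0) := by
    intro i
    calc ∑ j ∈ range b, (c (i+1) (j+1) - c i (j+1) - c (i+1) j + c i j)
        = ∑ j ∈ range b, ((fun j => c (i+1) j - c i j) (j+1) - (fun j => c (i+1) j - c i j) j) :=
          Finset.sum_congr rfl fun j _ => by
            show _ = (c (i+1) (j+1) - c i (j+1)) - (c (i+1) j - c i j)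
            ring
      _ = (fun j => c (i+1) j - c i j) b - (fun j => c (i+1) j - c i j) 0 :=
          Finset.sum_range_sub (fun j => c (i+1) j - c i j) b
      _ = (c (i+1) b - c (i+1) 0) - (c i b - c i 0) := by
          show (c (i+1) b - c i b) - (c (i+1) 0 - c i 0) = _
          ring
  calc ∑ i ∈ range a, ∑ j ∈ range b, (c (i+1) (j+1) - c i (j+1) - c (i+1) j + c i j)
      = ∑ i ∈ range a, ((fun i => c i b - c i 0) (i+1) - (fun i => c i b - c i 0) i) :=
        Finset.sum_congr rfl fun i _ => (h1 i).trans (by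
          show _ = (c (i+1) b - c (i+1) 0) - (c i b - c i 0)
          rfl)
    _ = (fun i => c i b - c i 0) a - (fun i => c i b - c i 0) 0 := Finset.sum_range_sub (fun i => c i b - c i 0) a
    _ = c a b - c a 0 - c 0 b + c 0 0 := by
        show (c a b - c a 0) - (c 0 b - c 0 0) = _
        ring

lemma swap4 (s t : Finset ℕ) (f : ℕ → ℕ → ℕ → ℕ → ℝ) :
    ∑ a ∈ s, ∑ b ∈ t, ∑ i ∈ s, ∑ j ∈ t, f a b i j
    = ∑ i ∈ s, ∑ j ∈ t, ∑ a ∈ s, ∑ b ∈ t, f a b i j := by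
  calc ∑ a ∈ s, ∑ b ∈ t, ∑ i ∈ s, ∑ j ∈ t, f a b i j
      = ∑ a ∈ s, ∑ i ∈ s, ∑ b ∈ t, ∑ j ∈ t, f a b i j :=
        Finset.sum_congr rfl fun a _ => Finset.sum_comm
    _ = ∑ i ∈ s, ∑ a ∈ s, ∑ b ∈ t, ∑ j ∈ t, f a b i j := Finset.sum_comm
    _ = ∑ i ∈ s, ∑ a ∈ s, ∑ j ∈ t, ∑ b ∈ t, f a b i j :=
        Finset.sum_congr rfl fun i _ => Finset.sum_congr rfl fun a _ => Finset.sum_comm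
    _ = ∑ i ∈ s, ∑ j ∈ t, ∑ a ∈ s, ∑ b ∈ t, f a b i j :=
        Finset.sum_congr rfl fun i _ => Finset.sum_comm

lemma monge (N M : ℕ) (c π ρ : ℕ → ℕ → ℝ)
    (hmar1 : ∀ a, Psum N M π a 0 = Psum N M ρ a 0)
    (hmar2 : ∀ b, Psum N M π 0 b = Psum N M ρ 0 b)
    (hcell : ∀ a b, 1 ≤ a → a < N → 1 ≤ b → b < M →
      0 ≤ (c a b - c (a-1) b - c a (b-1) + c (a-1) (b-1)) *
          (Psum N M π a b - Psum N M ρ a b)) :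
    ∑ a ∈ range N, ∑ b ∈ range M, c a b * ρ a b ≤
      ∑ a ∈ range N, ∑ b ∈ range M, c a b * π a b := by
  classical
  set σ : ℕ → ℕ → ℝ := fun a b => π a b - ρ a b with hσ
  have hQ : ∀ a b, Psum N M σ a b = Psum N M π a b - Psum N M ρ a b := by
    intro a b
    unfold Psum
    rw [← Finset.sum_sub_distrib]
    refine Finset.sum_congr rfl fun a' _ => ?_
    rw [← Finset.sum_sub_distrib]
    refine Finset.sum_congr rfl fun b' _ => ?_
    split_ifs <;> simp [hσ]
  have hrow : ∀ a, a < N → ∑ b ∈ range M, σ a b = 0 := by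
    intro a ha
    rw [Psum_row N M σ a ha, hQ, hQ, hmar1, hmar1 (a+1)]
    ring
  have hcol : ∀ b, b < M → ∑ a ∈ range N, σ a b = 0 := by
    intro b hb
    rw [Psum_col N M σ b hb, hQ, hQ, hmar2, hmar2 (b+1)]
    ring
  rw [← sub_nonneg, ← Finset.sum_sub_distrib]
  have hsub : (∑ a ∈ range N,
      ((∑ b ∈ range M, c a b * π a b) - ∑ b ∈ range M, c a b * ρ a b))
      = ∑ a ∈ range N, ∑ b ∈ range M, c a b * σ a b := by
    refine Finset.sum_congr rfl fun a _ => ?_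
    rw [← Finset.sum_sub_distrib]
    exact Finset.sum_congr rfl fun b _ => by rw [hσ]; ring
  rw [hsub]
  set Δ : ℕ → ℕ → ℝ := fun i j => c (i+1) (j+1) - c i (j+1) - c (i+1) j + c i j with hΔ
  have hdecomp : ∀ a ∈ range N, ∀ b ∈ range M,
      c a b = (∑ i ∈ range N, ∑ j ∈ range M, if i < a ∧ j < b then Δ i j else 0)
        + c a 0 + c 0 b - c 0 0 := by
    intro a ha b hb
    have hshrink : (∑ i ∈ range N, ∑ j ∈ range M, if i < a ∧ j < b then Δ i j else 0)
        = ∑ i ∈ range a, ∑ j ∈ range b, Δ i j := by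
      have step : ∀ i, (∑ j ∈ range M, if i < a ∧ j < b then Δ i j else 0)
          = if i < a then (∑ j ∈ range M, if j < b then Δ i j else 0) else 0 := by
        intro i
        by_cases h : i < a <;> simp [h]
      have e := Finset.sum_congr rfl fun i (_ : i ∈ range N) => step i
      rw [e, sum_ite_range N a (le_of_lt (mem_range.mp ha))]
      exact Finset.sum_congr rfl fun i _ =>
        sum_ite_range M b (le_of_lt (mem_range.mp hb)) _
    rw [hshrink]
    have := tele2 c a b
    rw [hΔ]
    rw [this]
    ring
  have hmain : (∑ a ∈ range N, ∑ b ∈ range M, c a b * σ a b)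
      = ∑ i ∈ range N, ∑ j ∈ range M, Δ i j * Psum N M σ (i+1) (j+1) := by
    have expand : ∀ a ∈ range N, ∀ b ∈ range M, c a b * σ a b
        = (∑ i ∈ range N, ∑ j ∈ range M, if i < a ∧ j < b then Δ i j * σ a b else 0)
          + c a 0 * σ a b + c 0 b * σ a b - c 0 0 * σ a b := by
      intro a ha b hb
      have h0 : c a b * σ a b = ((∑ i ∈ range N, ∑ j ∈ range M,
          if i < a ∧ j < b then Δ i j else 0) + c a 0 + c 0 b - c 0 0) * σ a b := by
        rw [← hdecomp a ha b hb]
      rw [h0, sub_mul, add_mul, add_mul, Finset.sum_mul]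
      congr 1
      congr 1
      congr 1
      refine Finset.sum_congr rfl fun i _ => ?_
      rw [Finset.sum_mul]
      exact Finset.sum_congr rfl fun j _ => by rw [ite_mul, zero_mul]
    calc ∑ a ∈ range N, ∑ b ∈ range M, c a b * σ a b
        = ∑ a ∈ range N, ∑ b ∈ range M,
            ((∑ i ∈ range N, ∑ j ∈ range M, if i < a ∧ j < b then Δ i j * σ a b else 0)
              + c a 0 * σ a b + c 0 b * σ a b - c 0 0 * σ a b) :=
          Finset.sum_congr rfl fun a ha => Finset.sum_congr rfl fun b hb =>
            expand a ha b hb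
      _ = (∑ a ∈ range N, ∑ b ∈ range M, ∑ i ∈ range N, ∑ j ∈ range M,
              (if i < a ∧ j < b then Δ i j * σ a b else 0))
          + (∑ a ∈ range N, ∑ b ∈ range M, c a 0 * σ a b)
          + (∑ a ∈ range N, ∑ b ∈ range M, c 0 b * σ a b)
          - (∑ a ∈ range N, ∑ b ∈ range M, c 0 0 * σ a b) := by
          simp only [Finset.sum_add_distrib, Finset.sum_sub_distrib]
      _ = ∑ i ∈ range N, ∑ j ∈ range M, Δ i j * Psum N M σ (i+1) (j+1) := by
          have e1 : (∑ a ∈ range N, ∑ b ∈ range M, c a 0 * σ a b) = 0 := by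
            refine Finset.sum_eq_zero fun a ha => ?_
            rw [← Finset.mul_sum, hrow a (mem_range.mp ha), mul_zero]
          have e2 : (∑ a ∈ range N, ∑ b ∈ range M, c 0 b * σ a b) = 0 := by
            rw [Finset.sum_comm]
            refine Finset.sum_eq_zero fun b hb => ?_
            rw [← Finset.mul_sum, hcol b (mem_range.mp hb), mul_zero]
          have e3 : (∑ a ∈ range N, ∑ b ∈ range M, c 0 0 * σ a b) = 0 := by
            refine Finset.sum_eq_zero fun a ha => ?_
            rw [← Finset.mul_sum, hrow a (mem_range.mp ha), mul_zero]
          rw [e1, e2, e3, swap4]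
          rw [add_zero, add_zero, sub_zero]
          refine Finset.sum_congr rfl fun i _ => Finset.sum_congr rfl fun j _ => ?_
          have e4 : (∑ a ∈ range N, ∑ b ∈ range M, if i < a ∧ j < b then Δ i j * σ a b else 0)
              = Δ i j * ∑ a ∈ range N, ∑ b ∈ range M,
                  (if i+1 ≤ a ∧ j+1 ≤ b then σ a b else 0) := by
            rw [Finset.mul_sum]
            refine Finset.sum_congr rfl fun a _ => ?_
            rw [Finset.mul_sum]
            refine Finset.sum_congr rfl fun b _ => ?_
            rw [mul_ite, mul_zero]
            exact if_congr (and_congr Nat.lt_iff_add_one_le Nat.lt_iff_add_one_le) rfl rfl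
          rw [e4]
          rfl
  rw [hmain]
  refine Finset.sum_nonneg fun i hi => Finset.sum_nonneg fun j hj => ?_
  by_cases hiN : i + 1 < N
  · by_cases hjM : j + 1 < M
    · have h := hcell (i+1) (j+1) (by omega) hiN (by omega) hjM
      simp only [Nat.add_sub_cancel] at h
      rw [hQ]
      exact h
    · rw [Psum_zero_of_ge N M σ _ _ (Or.inr (by omega)), mul_zero]
  · rw [Psum_zero_of_ge N M σ _ _ (Or.inl (by omega)), mul_zero]


variable {T n m : ℕ} {D : Type}

def prev (T : ℕ) (t : Fin (T+1)) : Fin (T+1) :=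
  ⟨t.val - 1, Nat.lt_of_le_of_lt (Nat.sub_le _ _) t.isLt⟩

lemma prev_zero : prev T 0 = 0 := rfl

lemma prev_succ (t : Fin T) : prev T t.succ = t.castSucc := by
  apply Fin.ext
  simp [prev]

lemma prev_of_val_zero (t : Fin (T+1)) (h : t.val = 0) : prev T t = t := by
  apply Fin.ext
  simp [prev, h]

lemma prev_mk_succ (k : ℕ) (hk : k + 1 < T + 1) :
    prev T ⟨k+1, hk⟩ = Fin.castSucc ⟨k, by omega⟩ := rfl

lemma mk_succ_eq_succ (k : ℕ) (hk : k + 1 < T + 1) :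
    (⟨k+1, hk⟩ : Fin (T+1)) = Fin.succ ⟨k, by omega⟩ := rfl

/-- The deterministic (integral) point following height paths `A` (dikes)
and `G` (barrier). -/
def mkPath (A : Fin (T+1) → D → Fin n) (G : Fin (T+1) → Fin m) :
    DikePoint T n m D where
  CY t d h1 h2 := if h1 = A (prev T t) d ∧ h2 = A t d then 1 else 0
  B t g1 g2 := if g1 = G (prev T t) ∧ g2 = G t then 1 else 0
  DY t d h g := if h = A t d ∧ g = G t then 1 else 0

lemma mkPath_isIntegral (A : Fin (T+1) → D → Fin n) (G : Fin (T+1) → Fin m) :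
    isIntegral (mkPath (D := D) A G) := by
  refine ⟨fun t d h1 h2 => ?_, fun t g1 g2 => ?_, fun t d h g => ?_⟩ <;>
    · simp only [mkPath]
      split_ifs <;> simp

section indicator_sums

variable [NeZero n] [NeZero m]

lemma sum_Iic_ind (h c1 c2 : Fin n) (hle : c1 ≤ c2) :
    (∑ h1 ∈ Iic h, if h1 = c1 ∧ h = c2 then (1:ℝ) else 0) = if h = c2 then 1 else 0 := by
  by_cases hc : h = c2
  · subst hc
    rw [if_pos rfl]
    have e : ∀ h1 ∈ Iic h, (if h1 = c1 ∧ h = h then (1:ℝ) else 0) = if h1 = c1 then 1 else 0 :=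
      fun h1 _ => by simp
    rw [Finset.sum_congr rfl e, Finset.sum_ite_eq' (Iic h) c1 (fun _ => (1:ℝ)),
      if_pos (mem_Iic.mpr hle)]
  · rw [if_neg hc]
    exact Finset.sum_eq_zero fun h1 _ => if_neg (fun hh => hc hh.2)

lemma sum_Ici_ind (h c1 c2 : Fin n) (hle : c1 ≤ c2) :
    (∑ h3 ∈ Ici h, if h = c1 ∧ h3 = c2 then (1:ℝ) else 0) = if h = c1 then 1 else 0 := by
  by_cases hc : h = c1
  · subst hc
    rw [if_pos rfl]
    have e : ∀ h3 ∈ Ici h, (if h = h ∧ h3 = c2 then (1:ℝ) else 0) = if h3 = c2 then 1 else 0 :=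
      fun h3 _ => by simp
    rw [Finset.sum_congr rfl e, Finset.sum_ite_eq' (Ici h) c2 (fun _ => (1:ℝ)),
      if_pos (mem_Ici.mpr hle)]
  · rw [if_neg hc]
    exact Finset.sum_eq_zero fun h3 _ => if_neg (fun hh => hc hh.1)

lemma sum_univ_ind (c : Fin n) : (∑ g : Fin n, if g = c then (1:ℝ) else 0) = 1 := by
  rw [Finset.sum_ite_eq' univ c (fun _ => (1:ℝ)), if_pos (mem_univ c)]

end indicator_sums

lemma mkPath_memQ [Fintype D] [NeZero n] [NeZero m]
    (A : Fin (T+1) → D → Fin n) (G : Fin (T+1) → Fin m)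
    (hA0 : ∀ d, A 0 d = 0) (hG0 : G 0 = 0)
    (hA : ∀ t d, A (prev T t) d ≤ A t d) (hG : ∀ t, G (prev T t) ≤ G t) :
    memQ (mkPath (D := D) A G) := by
  refine ⟨?_, ?_, ?_, ?_, ?_, ?_, ?_, ?_, ?_, ?_, ?_, ?_, ?_⟩
  · intro t d h1 h2; simp only [mkPath]; split_ifs <;> norm_num
  · intro t g1 g2; simp only [mkPath]; split_ifs <;> norm_num
  · intro t d h g; simp only [mkPath]; split_ifs <;> norm_num
  · intro t d h1 h2 hle
    simp only [mkPath]
    refine if_neg ?_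
    rintro ⟨rfl, rfl⟩
    exact hle (hA t d)
  · intro t g1 g2 hle
    simp only [mkPath]
    refine if_neg ?_
    rintro ⟨rfl, rfl⟩
    exact hle (hG t)
  · intro d
    simp only [mkPath]
    rw [prev_zero, hA0 d]
    simp
  · intro d h1 h2 h2pos
    simp only [mkPath]
    refine if_neg ?_
    rintro ⟨-, rfl⟩
    rw [hA0 d] at h2pos
    exact lt_irrefl _ h2pos
  · simp only [mkPath]
    rw [prev_zero, hG0]
    simp
  · intro g1 g2 g2pos
    simp only [mkPath]
    refine if_neg ?_
    rintro ⟨-, rfl⟩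
    rw [hG0] at g2pos
    exact lt_irrefl _ g2pos
  · intro t d h
    simp only [mkPath]
    rw [sum_Iic_ind h (A (prev T t.castSucc) d) (A t.castSucc d) (hA _ d),
      sum_Ici_ind h (A (prev T t.succ) d) (A t.succ d) (hA _ d), prev_succ]
  · intro t d h
    simp only [mkPath]
    rw [sum_Iic_ind h (A (prev T t) d) (A t d) (hA t d)]
    by_cases hc : h = A t d
    · rw [if_pos hc]
      have e : ∀ g : Fin m, (if h = A t d ∧ g = G t then (1:ℝ) else 0)
          = if g = G t then 1 else 0 := fun g => by simp [hc]
      rw [Finset.sum_congr rfl (fun g _ => e g), sum_univ_ind]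
    · rw [if_neg hc]
      exact (Finset.sum_eq_zero fun g _ => if_neg (fun hh => hc hh.1)).symm
  · intro t g
    simp only [mkPath]
    rw [sum_Iic_ind g (G (prev T t.castSucc)) (G t.castSucc) (hG _),
      sum_Ici_ind g (G (prev T t.succ)) (G t.succ) (hG _), prev_succ]
  · intro t d g
    simp only [mkPath]
    rw [sum_Iic_ind g (G (prev T t)) (G t) (hG t)]
    by_cases hc : g = G t
    · rw [if_pos hc]
      have e : ∀ h : Fin n, (if h = A t d ∧ g = G t then (1:ℝ) else 0)
          = if h = A t d then 1 else 0 := fun h => by simp [hc]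
      rw [Finset.sum_congr rfl (fun h _ => e h), sum_univ_ind]
    · rw [if_neg hc]
      exact (Finset.sum_eq_zero fun h _ => if_neg (fun hh => hc hh.2)).symm

lemma pieceC_mkPath [NeZero n] (c : Fin n → Fin n → ℝ) (c1 c2 : Fin n) (hle : c1 ≤ c2) :
    (∑ h2 : Fin n, ∑ h1 ∈ Iic h2, c h1 h2 * (if h1 = c1 ∧ h2 = c2 then (1:ℝ) else 0))
      = c c1 c2 := by
  have e : ∀ h2 : Fin n, (∑ h1 ∈ Iic h2, c h1 h2 * (if h1 = c1 ∧ h2 = c2 then (1:ℝ) else 0))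
      = if h2 = c2 then (∑ h1 ∈ Iic h2, if h1 = c1 then c h1 h2 else 0) else 0 := by
    intro h2
    by_cases hc : h2 = c2
    · rw [if_pos hc]
      refine Finset.sum_congr rfl fun h1 _ => ?_
      by_cases h1c : h1 = c1 <;> simp [h1c, hc]
    · rw [if_neg hc]
      exact Finset.sum_eq_zero fun h1 _ => by
        rw [if_neg (fun hh => hc hh.2), mul_zero]
  rw [Finset.sum_congr rfl (fun h2 _ => e h2),
    Finset.sum_ite_eq' univ c2 (fun h2 => ∑ h1 ∈ Iic h2, if h1 = c1 then c h1 h2 else 0),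
    if_pos (mem_univ c2),
    Finset.sum_ite_eq' (Iic c2) c1 (fun h1 => c h1 c2), if_pos (mem_Iic.mpr hle)]

lemma pieceF_mkPath [NeZero n] [NeZero m] (c : Fin n → Fin m → ℝ) (c1 : Fin n) (c2 : Fin m) :
    (∑ h : Fin n, ∑ g : Fin m, c h g * (if h = c1 ∧ g = c2 then (1:ℝ) else 0)) = c c1 c2 := by
  have e : ∀ h : Fin n, (∑ g : Fin m, c h g * (if h = c1 ∧ g = c2 then (1:ℝ) else 0))
      = if h = c1 then (∑ g : Fin m, if g = c2 then c h g else 0) else 0 := by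
    intro h
    by_cases hc : h = c1
    · rw [if_pos hc]
      refine Finset.sum_congr rfl fun g _ => ?_
      by_cases gc : g = c2 <;> simp [gc, hc]
    · rw [if_neg hc]
      exact Finset.sum_eq_zero fun g _ => by
        rw [if_neg (fun hh => hc hh.1), mul_zero]
  rw [Finset.sum_congr rfl (fun h _ => e h),
    Finset.sum_ite_eq' univ c1 (fun h => ∑ g : Fin m, if g = c2 then c h g else 0),
    if_pos (mem_univ c1),
    Finset.sum_ite_eq' univ c2 (fun g => c c1 g), if_pos (mem_univ c2)]


section Survival

variable [Fintype D] [NeZero n] [NeZero m]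

/-- Probability that dike `d` has height `h` at time `t`. -/
noncomputable def pd (y : DikePoint T n m D) (t : Fin (T+1)) (d : D) (h : Fin n) : ℝ :=
  ∑ h1 ∈ Iic h, y.CY t d h1 h

/-- Probability that the barrier has height `g` at time `t`. -/
noncomputable def pb (y : DikePoint T n m D) (t : Fin (T+1)) (g : Fin m) : ℝ :=
  ∑ g1 ∈ Iic g, y.B t g1 g

/-- Survival function of the dike height distribution. -/
noncomputable def Sd (y : DikePoint T n m D) (t : Fin (T+1)) (d : D) (h : Fin n) : ℝ :=
  ∑ h3 ∈ Ici h, pd y t d h3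

/-- Survival function of the barrier height distribution. -/
noncomputable def Sb (y : DikePoint T n m D) (t : Fin (T+1)) (g : Fin m) : ℝ :=
  ∑ g3 ∈ Ici g, pb y t g3

variable {y : DikePoint T n m D}

lemma pd_nonneg (hy : memQ y) (t : Fin (T+1)) (d : D) (h : Fin n) : 0 ≤ pd y t d h :=
  Finset.sum_nonneg fun h1 _ => (hy.1 t d h1 h).1

lemma pb_nonneg (hy : memQ y) (t : Fin (T+1)) (g : Fin m) : 0 ≤ pb y t g :=
  Finset.sum_nonneg fun g1 _ => (hy.2.1 t g1 g).1

lemma Sd_nonneg (hy : memQ y) (t : Fin (T+1)) (d : D) (h : Fin n) : 0 ≤ Sd y t d h :=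
  Finset.sum_nonneg fun h3 _ => pd_nonneg hy t d h3

lemma Sb_nonneg (hy : memQ y) (t : Fin (T+1)) (g : Fin m) : 0 ≤ Sb y t g :=
  Finset.sum_nonneg fun g3 _ => pb_nonneg hy t g3

lemma Sd_anti (hy : memQ y) (t : Fin (T+1)) (d : D) {h h' : Fin n} (hh : h ≤ h') :
    Sd y t d h' ≤ Sd y t d h :=
  Finset.sum_le_sum_of_subset_of_nonneg (Finset.Ici_subset_Ici.mpr hh)
    (fun h3 _ _ => pd_nonneg hy t d h3)

lemma Sb_anti (hy : memQ y) (t : Fin (T+1)) {g g' : Fin m} (hh : g ≤ g') :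
    Sb y t g' ≤ Sb y t g :=
  Finset.sum_le_sum_of_subset_of_nonneg (Finset.Ici_subset_Ici.mpr hh)
    (fun g3 _ _ => pb_nonneg hy t g3)

lemma pd_zero_t0 (hy : memQ y) (d : D) (h : Fin n) :
    pd y 0 d h = if h = 0 then 1 else 0 := by
  by_cases hc : h = 0
  · subst hc
    rw [if_pos rfl]
    unfold pd
    have e : Iic (0 : Fin n) = {0} := by
      ext x
      simp [Fin.le_zero_iff]
    rw [e, Finset.sum_singleton]
    exact hy.2.2.2.2.2.1 d
  · rw [if_neg hc]
    exact Finset.sum_eq_zero fun h1 _ =>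
      hy.2.2.2.2.2.2.1 d h1 h ((Fin.pos_iff_ne_zero' _).mpr hc)

lemma pb_zero_t0 (hy : memQ y) (g : Fin m) :
    pb y 0 g = if g = 0 then 1 else 0 := by
  by_cases hc : g = 0
  · subst hc
    rw [if_pos rfl]
    unfold pb
    have e : Iic (0 : Fin m) = {0} := by
      ext x
      simp [Fin.le_zero_iff]
    rw [e, Finset.sum_singleton]
    exact hy.2.2.2.2.2.2.2.1
  · rw [if_neg hc]
    exact Finset.sum_eq_zero fun g1 _ =>
      hy.2.2.2.2.2.2.2.2.1 g1 g ((Fin.pos_iff_ne_zero' _).mpr hc)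

lemma Ici_eq_filter {α : Type*} [Fintype α] [LinearOrder α] [LocallyFiniteOrderTop α]
    (h : α) : Ici h = univ.filter (fun x => h ≤ x) := by
  ext x
  simp

lemma Iic_eq_filter {α : Type*} [Fintype α] [LinearOrder α] [LocallyFiniteOrderBot α]
    (h : α) : Iic h = univ.filter (fun x => x ≤ h) := by
  ext x
  simp

/-- Row sums of the transition matrix `CY t` give the height distribution at the
previous time. -/
lemma rowCY (hy : memQ y) (t : Fin (T+1)) (d : D) (a : Fin n) :
    (∑ h2 : Fin n, y.CY t d a h2) = pd y (prev T t) d a := by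
  rcases t with ⟨tv, htv⟩
  cases tv with
  | zero =>
    have h0 : (⟨0, htv⟩ : Fin (T+1)) = 0 := rfl
    rw [h0, prev_zero, pd_zero_t0 hy]
    rw [Finset.sum_eq_single_of_mem 0 (mem_univ 0)
      (fun h2 _ hne => hy.2.2.2.2.2.2.1 d a h2 ((Fin.pos_iff_ne_zero' _).mpr hne))]
    by_cases hc : a = 0
    · subst hc
      rw [if_pos rfl]
      exact hy.2.2.2.2.2.1 d
    · rw [if_neg hc]
      exact hy.2.2.2.1 0 d a 0 fun hle => hc (le_antisymm hle (Fin.zero_le a))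
  | succ k =>
    rw [mk_succ_eq_succ k htv, prev_succ]
    have e1 : (∑ h2 : Fin n, y.CY (Fin.succ ⟨k, by omega⟩) d a h2)
        = ∑ h2 ∈ Ici a, y.CY (Fin.succ ⟨k, by omega⟩) d a h2 := by
      symm
      refine Finset.sum_subset (Finset.subset_univ _) fun h2 _ hne => ?_
      refine hy.2.2.2.1 _ d a h2 ?_
      simpa using hne
    rw [e1, ← hy.2.2.2.2.2.2.2.2.2.1 ⟨k, by omega⟩ d a]
    rfl

lemma rowB (hy : memQ y) (t : Fin (T+1)) (a : Fin m) :
    (∑ g2 : Fin m, y.B t a g2) = pb y (prev T t) a := by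
  rcases t with ⟨tv, htv⟩
  cases tv with
  | zero =>
    have h0 : (⟨0, htv⟩ : Fin (T+1)) = 0 := rfl
    rw [h0, prev_zero, pb_zero_t0 hy]
    rw [Finset.sum_eq_single_of_mem 0 (mem_univ 0)
      (fun g2 _ hne => hy.2.2.2.2.2.2.2.2.1 a g2 ((Fin.pos_iff_ne_zero' _).mpr hne))]
    by_cases hc : a = 0
    · subst hc
      rw [if_pos rfl]
      exact hy.2.2.2.2.2.2.2.1
    · rw [if_neg hc]
      exact hy.2.2.2.2.1 0 a 0 fun hle => hc (le_antisymm hle (Fin.zero_le a))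
  | succ k =>
    rw [mk_succ_eq_succ k htv, prev_succ]
    have e1 : (∑ g2 : Fin m, y.B (Fin.succ ⟨k, by omega⟩) a g2)
        = ∑ g2 ∈ Ici a, y.B (Fin.succ ⟨k, by omega⟩) a g2 := by
      symm
      refine Finset.sum_subset (Finset.subset_univ _) fun g2 _ hne => ?_
      refine hy.2.2.2.2.1 _ a g2 ?_
      simpa using hne
    rw [e1, ← hy.2.2.2.2.2.2.2.2.2.2.2.1 ⟨k, by omega⟩ a]
    rfl

lemma colCY (hy : memQ y) (t : Fin (T+1)) (d : D) (b : Fin n) :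
    (∑ h1 : Fin n, y.CY t d h1 b) = pd y t d b := by
  symm
  refine Finset.sum_subset (Finset.subset_univ _) fun h1 _ hne => ?_
  refine hy.2.2.2.1 t d h1 b ?_
  simpa using hne

lemma colB (hy : memQ y) (t : Fin (T+1)) (b : Fin m) :
    (∑ g1 : Fin m, y.B t g1 b) = pb y t b := by
  symm
  refine Finset.sum_subset (Finset.subset_univ _) fun g1 _ hne => ?_
  refine hy.2.2.2.2.1 t g1 b ?_
  simpa using hne

lemma Sd_zero_eq_one (hy : memQ y) (t : Fin (T+1)) (d : D) : Sd y t d 0 = 1 := by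
  have hIci : Ici (0 : Fin n) = univ := by
    ext x
    simp [Fin.zero_le]
  induction t using Fin.induction with
  | zero =>
    unfold Sd
    rw [hIci]
    have e : ∀ h ∈ (univ : Finset (Fin n)), pd y 0 d h = if h = 0 then (1:ℝ) else 0 :=
      fun h _ => pd_zero_t0 hy d h
    rw [Finset.sum_congr rfl e, sum_univ_ind]
  | succ t ih =>
    unfold Sd
    rw [hIci]
    have e1 : (∑ h : Fin n, pd y t.succ d h) = ∑ h : Fin n, ∑ h1 : Fin n, y.CY t.succ d h1 h :=
      Finset.sum_congr rfl fun h _ => (colCY hy t.succ d h).symm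
    rw [e1, Finset.sum_comm]
    have e2 : (∑ h1 : Fin n, ∑ h : Fin n, y.CY t.succ d h1 h)
        = ∑ h1 : Fin n, pd y t.castSucc d h1 := by
      refine Finset.sum_congr rfl fun h1 _ => ?_
      rw [rowCY hy t.succ d h1, prev_succ]
    rw [e2]
    unfold Sd at ih
    rw [hIci] at ih
    exact ih

lemma Sb_zero_eq_one (hy : memQ y) (t : Fin (T+1)) : Sb y t 0 = 1 := by
  have hIci : Ici (0 : Fin m) = univ := by
    ext x
    simp [Fin.zero_le]
  induction t using Fin.induction with
  | zero =>
    unfold Sb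
    rw [hIci]
    have e : ∀ g ∈ (univ : Finset (Fin m)), pb y 0 g = if g = 0 then (1:ℝ) else 0 :=
      fun g _ => pb_zero_t0 hy g
    rw [Finset.sum_congr rfl e, sum_univ_ind]
  | succ t ih =>
    unfold Sb
    rw [hIci]
    have e1 : (∑ g : Fin m, pb y t.succ g) = ∑ g : Fin m, ∑ g1 : Fin m, y.B t.succ g1 g :=
      Finset.sum_congr rfl fun g _ => (colB hy t.succ g).symm
    rw [e1, Finset.sum_comm]
    have e2 : (∑ g1 : Fin m, ∑ g : Fin m, y.B t.succ g1 g)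
        = ∑ g1 : Fin m, pb y t.castSucc g1 := by
      refine Finset.sum_congr rfl fun g1 _ => ?_
      rw [rowB hy t.succ g1, prev_succ]
    rw [e2]
    unfold Sb at ih
    rw [hIci] at ih
    exact ih

lemma Sd_le_one (hy : memQ y) (t : Fin (T+1)) (d : D) (h : Fin n) : Sd y t d h ≤ 1 := by
  rw [← Sd_zero_eq_one hy t d]
  exact Sd_anti hy t d (Fin.zero_le h)

lemma Sb_le_one (hy : memQ y) (t : Fin (T+1)) (g : Fin m) : Sb y t g ≤ 1 := by
  rw [← Sb_zero_eq_one hy t]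
  exact Sb_anti hy t (Fin.zero_le g)

/-- The dike only gets higher: survival functions increase in time. -/
lemma Sd_prev_le (hy : memQ y) (t : Fin (T+1)) (d : D) (h : Fin n) :
    Sd y (prev T t) d h ≤ Sd y t d h := by
  rcases t with ⟨tv, htv⟩
  cases tv with
  | zero =>
    rw [prev_of_val_zero _ rfl]
  | succ k =>
    rw [mk_succ_eq_succ k htv, prev_succ]
    set s : Fin T := ⟨k, by omega⟩
    have eL : Sd y s.castSucc d h
        = ∑ p : Fin n, ∑ q : Fin n, (if h ≤ p ∧ p ≤ q then y.CY s.succ d p q else 0) := by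
      unfold Sd
      rw [Ici_eq_filter, Finset.sum_filter]
      have e : ∀ p : Fin n, (if h ≤ p then pd y s.castSucc d p else 0)
          = ∑ q : Fin n, (if h ≤ p ∧ p ≤ q then y.CY s.succ d p q else 0) := by
        intro p
        by_cases hp : h ≤ p
        · rw [if_pos hp]
          unfold pd
          rw [hy.2.2.2.2.2.2.2.2.2.1 s d p, Ici_eq_filter, Finset.sum_filter]
          exact Finset.sum_congr rfl fun q _ => if_congr (by tauto) rfl rfl
        · rw [if_neg hp]
          exact (Finset.sum_eq_zero fun q _ => if_neg fun hh => hp hh.1).symm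
      have e' := Finset.sum_congr rfl fun p (_ : p ∈ univ) => e p
      rw [e']
    have eR : Sd y s.succ d h
        = ∑ p : Fin n, ∑ q : Fin n, (if p ≤ q ∧ h ≤ q then y.CY s.succ d p q else 0) := by
      unfold Sd
      rw [Ici_eq_filter, Finset.sum_filter]
      have e : ∀ q : Fin n, (if h ≤ q then pd y s.succ d q else 0)
          = ∑ p : Fin n, (if p ≤ q ∧ h ≤ q then y.CY s.succ d p q else 0) := by
        intro q
        by_cases hq : h ≤ q
        · rw [if_pos hq]
          unfold pd
          rw [Iic_eq_filter, Finset.sum_filter]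
          exact Finset.sum_congr rfl fun p _ => if_congr (by tauto) rfl rfl
        · rw [if_neg hq]
          exact (Finset.sum_eq_zero fun p _ => if_neg fun hh => hq hh.2).symm
      have e' := Finset.sum_congr rfl fun q (_ : q ∈ univ) => e q
      rw [e', Finset.sum_comm]
    rw [eL, eR]
    refine Finset.sum_le_sum fun p _ => Finset.sum_le_sum fun q _ => ?_
    by_cases hc : h ≤ p ∧ p ≤ q
    · rw [if_pos hc, if_pos ⟨hc.2, le_trans hc.1 hc.2⟩]
    · rw [if_neg hc]
      split_ifs with hc2
      · exact (hy.1 s.succ d p q).1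
      · exact le_rfl

/-- The barrier only gets higher. -/
lemma Sb_prev_le (hy : memQ y) (t : Fin (T+1)) (g : Fin m) :
    Sb y (prev T t) g ≤ Sb y t g := by
  rcases t with ⟨tv, htv⟩
  cases tv with
  | zero =>
    rw [prev_of_val_zero _ rfl]
  | succ k =>
    rw [mk_succ_eq_succ k htv, prev_succ]
    set s : Fin T := ⟨k, by omega⟩
    have eL : Sb y s.castSucc g
        = ∑ p : Fin m, ∑ q : Fin m, (if g ≤ p ∧ p ≤ q then y.B s.succ p q else 0) := by
      unfold Sb
      rw [Ici_eq_filter, Finset.sum_filter]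
      have e : ∀ p : Fin m, (if g ≤ p then pb y s.castSucc p else 0)
          = ∑ q : Fin m, (if g ≤ p ∧ p ≤ q then y.B s.succ p q else 0) := by
        intro p
        by_cases hp : g ≤ p
        · rw [if_pos hp]
          unfold pb
          rw [hy.2.2.2.2.2.2.2.2.2.2.2.1 s p, Ici_eq_filter, Finset.sum_filter]
          exact Finset.sum_congr rfl fun q _ => if_congr (by tauto) rfl rfl
        · rw [if_neg hp]
          exact (Finset.sum_eq_zero fun q _ => if_neg fun hh => hp hh.1).symm
      have e' := Finset.sum_congr rfl fun p (_ : p ∈ univ) => e p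
      rw [e']
    have eR : Sb y s.succ g
        = ∑ p : Fin m, ∑ q : Fin m, (if p ≤ q ∧ g ≤ q then y.B s.succ p q else 0) := by
      unfold Sb
      rw [Ici_eq_filter, Finset.sum_filter]
      have e : ∀ q : Fin m, (if g ≤ q then pb y s.succ q else 0)
          = ∑ p : Fin m, (if p ≤ q ∧ g ≤ q then y.B s.succ p q else 0) := by
        intro q
        by_cases hq : g ≤ q
        · rw [if_pos hq]
          unfold pb
          rw [Iic_eq_filter, Finset.sum_filter]
          exact Finset.sum_congr rfl fun p _ => if_congr (by tauto) rfl rfl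
        · rw [if_neg hq]
          exact (Finset.sum_eq_zero fun p _ => if_neg fun hh => hq hh.2).symm
      have e' := Finset.sum_congr rfl fun q (_ : q ∈ univ) => e q
      rw [e', Finset.sum_comm]
    rw [eL, eR]
    refine Finset.sum_le_sum fun p _ => Finset.sum_le_sum fun q _ => ?_
    by_cases hc : g ≤ p ∧ p ≤ q
    · rw [if_pos hc, if_pos ⟨hc.2, le_trans hc.1 hc.2⟩]
    · rw [if_neg hc]
      split_ifs with hc2
      · exact (hy.2.1 s.succ p q).1
      · exact le_rfl

end Survival


section Levels

variable [Fintype D] [NeZero n] [NeZero m]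

/-- The finite set of all survival-function values (plus `0`). -/
noncomputable def Vset (y : DikePoint T n m D) : Finset ℝ :=
  ((univ : Finset (Fin (T+1) × D × Fin n)).image fun p => Sd y p.1 p.2.1 p.2.2) ∪
  ((univ : Finset (Fin (T+1) × Fin m)).image fun p => Sb y p.1 p.2) ∪ {0}

noncomputable def kV (y : DikePoint T n m D) : ℕ := (Vset y).card

lemma zero_mem_Vset (y : DikePoint T n m D) : (0:ℝ) ∈ Vset y := by
  simp [Vset]

lemma Sd_mem_Vset (y : DikePoint T n m D) (t : Fin (T+1)) (d : D) (h : Fin n) :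
    Sd y t d h ∈ Vset y := by
  simp only [Vset, mem_union, mem_image]
  exact Or.inl (Or.inl ⟨(t, d, h), mem_univ _, rfl⟩)

lemma Sb_mem_Vset (y : DikePoint T n m D) (t : Fin (T+1)) (g : Fin m) :
    Sb y t g ∈ Vset y := by
  simp only [Vset, mem_union, mem_image]
  exact Or.inl (Or.inr ⟨(t, g), mem_univ _, rfl⟩)

lemma kV_pos (y : DikePoint T n m D) : 0 < kV y :=
  Finset.card_pos.mpr ⟨0, zero_mem_Vset y⟩

/-- The sorted enumeration of `Vset`, clamped at the top. -/
noncomputable def Efun (y : DikePoint T n m D) : ℕ → ℝ := fun i =>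
  ((Vset y).orderIsoOfFin rfl
    ⟨min i (kV y - 1), Nat.lt_of_le_of_lt (min_le_right _ _) (Nat.sub_lt (kV_pos y) one_pos)⟩ : ℝ)

lemma Efun_mem (y : DikePoint T n m D) (i : ℕ) : Efun y i ∈ Vset y :=
  ((Vset y).orderIsoOfFin rfl _).2

lemma Efun_mono (y : DikePoint T n m D) {i j : ℕ} (hij : i ≤ j) : Efun y i ≤ Efun y j := by
  unfold Efun
  exact Subtype.coe_le_coe.mpr (((Vset y).orderIsoOfFin rfl).monotone
    (by rw [Fin.mk_le_mk]; exact min_le_min_right _ hij))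

lemma Efun_strict (y : DikePoint T n m D) {i j : ℕ} (hij : i < j) (hj : j ≤ kV y - 1) :
    Efun y i < Efun y j := by
  unfold Efun
  exact Subtype.coe_lt_coe.mpr (((Vset y).orderIsoOfFin rfl).strictMono
    (by rw [Fin.mk_lt_mk]; omega))

lemma Efun_surj (y : DikePoint T n m D) (s : ℝ) (hs : s ∈ Vset y) :
    ∃ j ≤ kV y - 1, Efun y j = s := by
  have hlt := ((((Vset y).orderIsoOfFin rfl).symm ⟨s, hs⟩)).isLt
  refine ⟨((((Vset y).orderIsoOfFin rfl).symm ⟨s, hs⟩)).val, by unfold kV at *; omega, ?_⟩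
  unfold Efun
  have hidx : (⟨min ((((Vset y).orderIsoOfFin rfl).symm ⟨s, hs⟩)).val (kV y - 1),
      Nat.lt_of_le_of_lt (min_le_right _ _) (Nat.sub_lt (kV_pos y) one_pos)⟩ : Fin (kV y))
      = (((Vset y).orderIsoOfFin rfl).symm ⟨s, hs⟩) := by
    apply Fin.ext
    simp only
    unfold kV at *
    omega
  erw [hidx, OrderIso.apply_symm_apply]

variable {y : DikePoint T n m D}

lemma Vset_nonneg (hy : memQ y) (s : ℝ) (hs : s ∈ Vset y) : 0 ≤ s := by
  simp only [Vset, mem_union, mem_image, mem_singleton] at hs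
  rcases hs with (⟨p, -, rfl⟩ | ⟨p, -, rfl⟩) | rfl
  · exact Sd_nonneg hy _ _ _
  · exact Sb_nonneg hy _ _
  · exact le_refl 0

lemma Vset_le_one (hy : memQ y) (s : ℝ) (hs : s ∈ Vset y) : s ≤ 1 := by
  simp only [Vset, mem_union, mem_image, mem_singleton] at hs
  rcases hs with (⟨p, -, rfl⟩ | ⟨p, -, rfl⟩) | rfl
  · exact Sd_le_one hy _ _ _
  · exact Sb_le_one hy _ _
  · exact zero_le_one

lemma one_mem_Vset (hy : memQ y) : (1:ℝ) ∈ Vset y := by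
  have := Sb_mem_Vset y 0 0
  rwa [Sb_zero_eq_one hy] at this

lemma Efun_zero (hy : memQ y) : Efun y 0 = 0 := by
  obtain ⟨j, hj, hjE⟩ := Efun_surj y 0 (zero_mem_Vset y)
  have h1 : Efun y 0 ≤ Efun y j := Efun_mono y (Nat.zero_le j)
  have h2 : 0 ≤ Efun y 0 := Vset_nonneg hy _ (Efun_mem y 0)
  rw [hjE] at h1
  linarith

lemma Efun_last (hy : memQ y) : Efun y (kV y - 1) = 1 := by
  obtain ⟨j, hj, hjE⟩ := Efun_surj y 1 (one_mem_Vset hy)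
  have h1 : Efun y j ≤ Efun y (kV y - 1) := Efun_mono y hj
  have h2 : Efun y (kV y - 1) ≤ 1 := Vset_le_one hy _ (Efun_mem y _)
  rw [hjE] at h1
  linarith

lemma Efun_pos (hy : memQ y) (i : ℕ) (hi : i < kV y - 1) : 0 < Efun y (i+1) := by
  have := Efun_strict y (Nat.zero_lt_succ i) (by omega)
  rw [Efun_zero hy] at this
  exact this

lemma Efun_le_one (hy : memQ y) (i : ℕ) : Efun y i ≤ 1 :=
  Vset_le_one hy _ (Efun_mem y i)

/-- KEY telescoping lemma: the weights below level `s` sum to `s`. -/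
lemma key_sum (hy : memQ y) (s : ℝ) (hs : s ∈ Vset y) :
    (∑ i ∈ range (kV y - 1), if Efun y (i+1) ≤ s then Efun y (i+1) - Efun y i else 0)
      = s := by
  obtain ⟨j, hj, hjE⟩ := Efun_surj y s hs
  have hiff : ∀ i ∈ range (kV y - 1), (Efun y (i+1) ≤ s ↔ i < j) := by
    intro i hi
    simp only [mem_range] at hi
    constructor
    · intro hle
      by_contra hij
      push_neg at hij
      have := Efun_strict y (show j < i + 1 by omega) (by omega)
      rw [hjE] at this
      linarith
    · intro hij
      rw [← hjE]
      exact Efun_mono y (by omega)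
  have e : ∀ i ∈ range (kV y - 1),
      (if Efun y (i+1) ≤ s then Efun y (i+1) - Efun y i else 0)
        = (if i < j then Efun y (i+1) - Efun y i else 0) :=
    fun i hi => if_congr (hiff i hi) rfl rfl
  rw [Finset.sum_congr rfl e, sum_ite_range (kV y - 1) j hj (fun i => Efun y (i+1) - Efun y i),
    Finset.sum_range_sub (Efun y) j, hjE, Efun_zero hy, sub_zero]

/-- Conditional sum version used at call sites. -/
lemma key_sum_ind (hy : memQ y) (s : ℝ) (hs : s ∈ Vset y) (P : ℕ → Prop)
    [DecidablePred P] (hP : ∀ i, i < kV y - 1 → (P i ↔ Efun y (i+1) ≤ s)) :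
    (∑ i ∈ range (kV y - 1), if P i then Efun y (i+1) - Efun y i else 0) = s := by
  rw [← key_sum hy s hs]
  refine Finset.sum_congr rfl fun i hi => ?_
  exact if_congr (hP i (mem_range.mp hi)) rfl rfl

lemma sum_weights (hy : memQ y) :
    (∑ i ∈ range (kV y - 1), (Efun y (i+1) - Efun y i)) = 1 := by
  have := key_sum_ind hy 1 (one_mem_Vset hy) (fun _ => True)
    (fun i hi => by simp [Efun_le_one hy])
  simpa using this

end Levels

section Quantiles

variable [Fintype D] [NeZero n] [NeZero m]

/-- Quantile of the dike-height distribution at level `u`. -/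
noncomputable def qA (y : DikePoint T n m D) (u : ℝ) (t : Fin (T+1)) (d : D) : Fin n :=
  if h : (univ.filter fun hh => u ≤ Sd y t d hh).Nonempty
    then (univ.filter fun hh => u ≤ Sd y t d hh).max' h else 0

/-- Quantile of the barrier-height distribution at level `u`. -/
noncomputable def qG (y : DikePoint T n m D) (u : ℝ) (t : Fin (T+1)) : Fin m :=
  if h : (univ.filter fun gg => u ≤ Sb y t gg).Nonempty
    then (univ.filter fun gg => u ≤ Sb y t gg).max' h else 0

variable {y : DikePoint T n m D}

lemma qA_filter_nonempty (hy : memQ y) {u : ℝ} (hu1 : u ≤ 1) (t : Fin (T+1)) (d : D) :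
    (univ.filter fun hh => u ≤ Sd y t d hh).Nonempty := by
  refine ⟨0, ?_⟩
  rw [mem_filter, Sd_zero_eq_one hy]
  exact ⟨mem_univ _, hu1⟩

lemma qG_filter_nonempty (hy : memQ y) {u : ℝ} (hu1 : u ≤ 1) (t : Fin (T+1)) :
    (univ.filter fun gg => u ≤ Sb y t gg).Nonempty := by
  refine ⟨0, ?_⟩
  rw [mem_filter, Sb_zero_eq_one hy]
  exact ⟨mem_univ _, hu1⟩

lemma le_qA_iff (hy : memQ y) {u : ℝ} (hu1 : u ≤ 1) (t : Fin (T+1)) (d : D) (h : Fin n) :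
    h ≤ qA y u t d ↔ u ≤ Sd y t d h := by
  have hne := qA_filter_nonempty hy hu1 t d
  rw [qA, dif_pos hne]
  constructor
  · intro hle
    have hmax := (univ.filter fun hh => u ≤ Sd y t d hh).max'_mem hne
    rw [mem_filter] at hmax
    exact le_trans hmax.2 (Sd_anti hy t d hle)
  · intro hs
    exact Finset.le_max' _ h (mem_filter.mpr ⟨mem_univ _, hs⟩)

lemma le_qG_iff (hy : memQ y) {u : ℝ} (hu1 : u ≤ 1) (t : Fin (T+1)) (g : Fin m) :
    g ≤ qG y u t ↔ u ≤ Sb y t g := by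
  have hne := qG_filter_nonempty hy hu1 t
  rw [qG, dif_pos hne]
  constructor
  · intro hle
    have hmax := (univ.filter fun gg => u ≤ Sb y t gg).max'_mem hne
    rw [mem_filter] at hmax
    exact le_trans hmax.2 (Sb_anti hy t hle)
  · intro hs
    exact Finset.le_max' _ g (mem_filter.mpr ⟨mem_univ _, hs⟩)

lemma Sd_t0_ne (hy : memQ y) (d : D) {h : Fin n} (hne : h ≠ 0) : Sd y 0 d h = 0 := by
  refine Finset.sum_eq_zero fun h3 hh3 => ?_
  rw [pd_zero_t0 hy, if_neg]
  intro h30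
  subst h30
  rw [mem_Ici] at hh3
  exact hne (le_antisymm hh3 (Fin.zero_le h))

lemma Sb_t0_ne (hy : memQ y) {g : Fin m} (hne : g ≠ 0) : Sb y 0 g = 0 := by
  refine Finset.sum_eq_zero fun g3 hg3 => ?_
  rw [pb_zero_t0 hy, if_neg]
  intro g30
  subst g30
  rw [mem_Ici] at hg3
  exact hne (le_antisymm hg3 (Fin.zero_le g))

lemma qA_zero (hy : memQ y) {u : ℝ} (hu0 : 0 < u) (hu1 : u ≤ 1) (d : D) :
    qA y u 0 d = 0 := by
  by_contra hne
  have h1 : u ≤ Sd y 0 d (qA y u 0 d) := (le_qA_iff hy hu1 0 d _).mp le_rfl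
  rw [Sd_t0_ne hy d hne] at h1
  linarith

lemma qG_zero (hy : memQ y) {u : ℝ} (hu0 : 0 < u) (hu1 : u ≤ 1) :
    qG y u 0 = 0 := by
  by_contra hne
  have h1 : u ≤ Sb y 0 (qG y u 0) := (le_qG_iff hy hu1 0 _).mp le_rfl
  rw [Sb_t0_ne hy hne] at h1
  linarith

lemma qA_prev_le (hy : memQ y) {u : ℝ} (hu1 : u ≤ 1) (t : Fin (T+1)) (d : D) :
    qA y u (prev T t) d ≤ qA y u t d := by
  rw [le_qA_iff hy hu1 t d]
  exact le_trans ((le_qA_iff hy hu1 (prev T t) d _).mp le_rfl) (Sd_prev_le hy t d _)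

lemma qG_prev_le (hy : memQ y) {u : ℝ} (hu1 : u ≤ 1) (t : Fin (T+1)) :
    qG y u (prev T t) ≤ qG y u t := by
  rw [le_qG_iff hy hu1 t]
  exact le_trans ((le_qG_iff hy hu1 (prev T t) _).mp le_rfl) (Sb_prev_le hy t _)

end Quantiles


section Ext

variable [Fintype D] [NeZero n] [NeZero m]

/-- Extend a `Fin`-indexed matrix by zero to `ℕ × ℕ`. -/
noncomputable def ext (n' m' : ℕ) (f : Fin n' → Fin m' → ℝ) : ℕ → ℕ → ℝ :=
  fun a b => if h : a < n' ∧ b < m' then f ⟨a, h.1⟩ ⟨b, h.2⟩ else 0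

noncomputable def Sde (y : DikePoint T n m D) (t : Fin (T+1)) (d : D) : ℕ → ℝ :=
  fun a => if h : a < n then Sd y t d ⟨a, h⟩ else 0

noncomputable def Sbe (y : DikePoint T n m D) (t : Fin (T+1)) : ℕ → ℝ :=
  fun b => if h : b < m then Sb y t ⟨b, h⟩ else 0

lemma ext_nonneg {n' m' : ℕ} (f : Fin n' → Fin m' → ℝ) (hf : ∀ p q, 0 ≤ f p q)
    (a b : ℕ) : 0 ≤ ext n' m' f a b := by
  unfold ext
  split_ifs
  · exact hf _ _
  · exact le_rfl

lemma sum_tri_to_range (c f : Fin n → Fin n → ℝ)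
    (hf : ∀ h1 h2 : Fin n, ¬ h1 ≤ h2 → f h1 h2 = 0) :
    (∑ h2 : Fin n, ∑ h1 ∈ Iic h2, c h1 h2 * f h1 h2)
      = ∑ a ∈ range n, ∑ b ∈ range n, ext n n c a b * ext n n f a b := by
  have step1 : ∀ h2 : Fin n, (∑ h1 ∈ Iic h2, c h1 h2 * f h1 h2)
      = ∑ h1 : Fin n, c h1 h2 * f h1 h2 := by
    intro h2
    refine Finset.sum_subset (subset_univ _) fun h1 _ hne => ?_
    rw [hf h1 h2 (by simpa using hne), mul_zero]
  have e1 := Finset.sum_congr rfl fun h2 (_ : h2 ∈ univ) => step1 h2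
  rw [e1, Finset.sum_comm,
    ← Fin.sum_univ_eq_sum_range (fun a => ∑ b ∈ range n, ext n n c a b * ext n n f a b) n]
  refine Finset.sum_congr rfl fun h1 _ => ?_
  rw [← Fin.sum_univ_eq_sum_range (fun b => ext n n c h1.val b * ext n n f h1.val b) n]
  refine Finset.sum_congr rfl fun h2 _ => ?_
  unfold ext
  rw [dif_pos ⟨h1.isLt, h2.isLt⟩, dif_pos ⟨h1.isLt, h2.isLt⟩, Fin.eta, Fin.eta]

lemma sum_full_to_range (c f : Fin n → Fin m → ℝ) :
    (∑ h : Fin n, ∑ g : Fin m, c h g * f h g)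
      = ∑ a ∈ range n, ∑ b ∈ range m, ext n m c a b * ext n m f a b := by
  rw [← Fin.sum_univ_eq_sum_range (fun a => ∑ b ∈ range m, ext n m c a b * ext n m f a b) n]
  refine Finset.sum_congr rfl fun h1 _ => ?_
  rw [← Fin.sum_univ_eq_sum_range (fun b => ext n m c h1.val b * ext n m f h1.val b) m]
  refine Finset.sum_congr rfl fun h2 _ => ?_
  unfold ext
  rw [dif_pos ⟨h1.isLt, h2.isLt⟩, dif_pos ⟨h1.isLt, h2.isLt⟩, Fin.eta, Fin.eta]

lemma range_to_Ici (N : ℕ) (F : Fin N → ℝ) (a : ℕ) :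
    (∑ a' ∈ range N, if a ≤ a' then (if h : a' < N then F ⟨a', h⟩ else 0) else 0)
      = if h : a < N then ∑ h3 ∈ Ici (⟨a, h⟩ : Fin N), F h3 else 0 := by
  rw [← Fin.sum_univ_eq_sum_range
    (fun a' => if a ≤ a' then (if h : a' < N then F ⟨a', h⟩ else 0) else 0) N]
  by_cases ha : a < N
  · rw [dif_pos ha, Ici_eq_filter, Finset.sum_filter]
    refine Finset.sum_congr rfl fun i _ => ?_
    rw [dif_pos i.isLt, Fin.eta]
    exact if_congr (by simp [Fin.le_def]) rfl rfl
  · rw [dif_neg ha]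
    refine Finset.sum_eq_zero fun i _ => ?_
    rw [if_neg (by have := i.isLt; omega)]

lemma Psum_left_eq (N M : ℕ) (f : Fin N → Fin M → ℝ) (P : Fin N → ℝ)
    (hrow : ∀ p : Fin N, (∑ q : Fin M, f p q) = P p) (a : ℕ) :
    Psum N M (ext N M f) a 0
      = if h : a < N then ∑ h3 ∈ Ici (⟨a, h⟩ : Fin N), P h3 else 0 := by
  unfold Psum
  have e : ∀ a' ∈ range N,
      (∑ b' ∈ range M, if a ≤ a' ∧ 0 ≤ b' then ext N M f a' b' else 0)
      = if a ≤ a' then (if h : a' < N then P ⟨a', h⟩ else 0) else 0 := by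
    intro a' ha'
    have ha'N := mem_range.mp ha'
    by_cases hle : a ≤ a'
    · rw [if_pos hle, dif_pos ha'N, ← hrow ⟨a', ha'N⟩,
        Finset.sum_congr rfl fun b' (_ : b' ∈ range M) => if_pos ⟨hle, Nat.zero_le b'⟩,
        ← Fin.sum_univ_eq_sum_range (fun b' => ext N M f a' b') M]
      refine Finset.sum_congr rfl fun q _ => ?_
      unfold ext
      rw [dif_pos ⟨ha'N, q.isLt⟩, Fin.eta]
    · rw [if_neg hle]
      exact Finset.sum_eq_zero fun b' _ => if_neg fun hh => hle hh.1
  rw [Finset.sum_congr rfl e]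
  exact range_to_Ici N P a

lemma ext_transpose (N M : ℕ) (f : Fin N → Fin M → ℝ) :
    (fun x y => ext N M f y x) = ext M N (fun q p => f p q) := by
  funext x y
  unfold ext
  by_cases h : x < M ∧ y < N
  · rw [dif_pos ⟨h.2, h.1⟩, dif_pos h]
  · rw [dif_neg (fun hh => h ⟨hh.2, hh.1⟩), dif_neg h]

lemma Psum_right_eq (N M : ℕ) (f : Fin N → Fin M → ℝ) (P : Fin M → ℝ)
    (hcol : ∀ q : Fin M, (∑ p : Fin N, f p q) = P q) (b : ℕ) :
    Psum N M (ext N M f) 0 b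
      = if h : b < M then ∑ g3 ∈ Ici (⟨b, h⟩ : Fin M), P g3 else 0 := by
  rw [Psum_transpose, ext_transpose]
  exact Psum_left_eq M N (fun q p => f p q) P hcol b

variable {y : DikePoint T n m D}

lemma PsumCY_a (hy : memQ y) (t : Fin (T+1)) (d : D) (a : ℕ) :
    Psum n n (ext n n (y.CY t d)) a 0 = Sde y (prev T t) d a := by
  rw [Psum_left_eq n n (y.CY t d) (pd y (prev T t) d) (fun p => rowCY hy t d p) a]
  rfl

lemma PsumCY_b (hy : memQ y) (t : Fin (T+1)) (d : D) (b : ℕ) :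
    Psum n n (ext n n (y.CY t d)) 0 b = Sde y t d b := by
  rw [Psum_right_eq n n (y.CY t d) (pd y t d) (fun q => colCY hy t d q) b]
  rfl

lemma PsumB_a (hy : memQ y) (t : Fin (T+1)) (a : ℕ) :
    Psum m m (ext m m (y.B t)) a 0 = Sbe y (prev T t) a := by
  rw [Psum_left_eq m m (y.B t) (pb y (prev T t)) (fun p => rowB hy t p) a]
  rfl

lemma PsumB_b (hy : memQ y) (t : Fin (T+1)) (b : ℕ) :
    Psum m m (ext m m (y.B t)) 0 b = Sbe y t b := by
  rw [Psum_right_eq m m (y.B t) (pb y t) (fun q => colB hy t q) b]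
  rfl

lemma PsumDY_a (hy : memQ y) (t : Fin (T+1)) (d : D) (a : ℕ) :
    Psum n m (ext n m (y.DY t d)) a 0 = Sde y t d a := by
  rw [Psum_left_eq n m (y.DY t d) (pd y t d)
    (fun p => (hy.2.2.2.2.2.2.2.2.2.2.1 t d p).symm) a]
  rfl

lemma PsumDY_b (hy : memQ y) (t : Fin (T+1)) (d : D) (b : ℕ) :
    Psum n m (ext n m (y.DY t d)) 0 b = Sbe y t b := by
  rw [Psum_right_eq n m (y.DY t d) (pb y t)
    (fun q => (hy.2.2.2.2.2.2.2.2.2.2.2.2 t d q).symm) b]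
  rfl

lemma Psum_mono (N M : ℕ) (f : ℕ → ℕ → ℝ) (hf : ∀ a b, 0 ≤ f a b)
    {a b a2 b2 : ℕ} (ha : a2 ≤ a) (hb : b2 ≤ b) :
    Psum N M f a b ≤ Psum N M f a2 b2 := by
  unfold Psum
  refine Finset.sum_le_sum fun a' _ => Finset.sum_le_sum fun b' _ => ?_
  by_cases hc : a ≤ a' ∧ b ≤ b'
  · rw [if_pos hc, if_pos ⟨le_trans ha hc.1, le_trans hb hc.2⟩]
  · rw [if_neg hc]
    split_ifs with hc2
    · exact hf a' b'
    · exact le_rfl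

lemma Psum_tri_left (N : ℕ) (f : ℕ → ℕ → ℝ) (htri : ∀ a b, b < a → f a b = 0)
    {a b : ℕ} (hba : b ≤ a) : Psum N N f a b = Psum N N f a 0 := by
  unfold Psum
  refine Finset.sum_congr rfl fun a' _ => Finset.sum_congr rfl fun b' _ => ?_
  by_cases h1 : a ≤ a'
  · by_cases h2 : b ≤ b'
    · rw [if_pos ⟨h1, h2⟩, if_pos ⟨h1, Nat.zero_le b'⟩]
    · rw [if_neg (fun hh => h2 hh.2), if_pos ⟨h1, Nat.zero_le b'⟩,
        htri a' b' (by omega)]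
  · rw [if_neg (fun hh => h1 hh.1), if_neg (fun hh => h1 hh.1)]

lemma extCY_tri (hy : memQ y) (t : Fin (T+1)) (d : D) :
    ∀ a b, b < a → ext n n (y.CY t d) a b = 0 := by
  intro a b hba
  unfold ext
  split_ifs with h
  · exact hy.2.2.2.1 t d _ _ (by rw [Fin.le_def]; simp; omega)
  · rfl

lemma extB_tri (hy : memQ y) (t : Fin (T+1)) :
    ∀ a b, b < a → ext m m (y.B t) a b = 0 := by
  intro a b hba
  unfold ext
  split_ifs with h
  · exact hy.2.2.2.2.1 t _ _ (by rw [Fin.le_def]; simp; omega)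
  · rfl

end Ext


section Rho

open Classical in
/-- Mixture of point masses at `(A i, B i)` with weights `w i`. -/
noncomputable def rhoM (K : ℕ) (A B : ℕ → ℕ) (w : ℕ → ℝ) : ℕ → ℕ → ℝ :=
  fun a b => ∑ i ∈ range K, if A i = a ∧ B i = b then w i else 0

lemma swap3 (s t u : Finset ℕ) (f : ℕ → ℕ → ℕ → ℝ) :
    ∑ a ∈ s, ∑ b ∈ t, ∑ i ∈ u, f a b i = ∑ i ∈ u, ∑ a ∈ s, ∑ b ∈ t, f a b i := by
  calc ∑ a ∈ s, ∑ b ∈ t, ∑ i ∈ u, f a b i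
      = ∑ a ∈ s, ∑ i ∈ u, ∑ b ∈ t, f a b i :=
        Finset.sum_congr rfl fun a _ => Finset.sum_comm
    _ = ∑ i ∈ u, ∑ a ∈ s, ∑ b ∈ t, f a b i := Finset.sum_comm

lemma Psum_rho (N M K : ℕ) (A B : ℕ → ℕ) (w : ℕ → ℝ)
    (hA : ∀ i, A i < N) (hB : ∀ i, B i < M) (a b : ℕ) :
    Psum N M (rhoM K A B w) a b
      = ∑ i ∈ range K, if a ≤ A i ∧ b ≤ B i then w i else 0 := by
  classical
  unfold Psum rhoM
  have e1 : ∀ a' ∈ range N, ∀ b' ∈ range M,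
      (if a ≤ a' ∧ b ≤ b' then (∑ i ∈ range K, if A i = a' ∧ B i = b' then w i else 0) else 0)
      = ∑ i ∈ range K, (if A i = a' then (if B i = b' then
          (if a ≤ a' ∧ b ≤ b' then w i else 0) else 0) else 0) := by
    intro a' _ b' _
    by_cases hc : a ≤ a' ∧ b ≤ b'
    · rw [if_pos hc]
      refine Finset.sum_congr rfl fun i _ => ?_
      by_cases h1 : A i = a'
      · by_cases h2 : B i = b' <;> simp [h1, h2, hc]
      · simp [h1]
    · rw [if_neg hc]
      symm
      refine Finset.sum_eq_zero fun i _ => ?_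
      by_cases h1 : A i = a' <;> by_cases h2 : B i = b' <;> simp [h1, h2, hc]
  rw [Finset.sum_congr rfl fun a' ha' =>
    Finset.sum_congr rfl fun b' hb' => e1 a' ha' b' hb', swap3]
  refine Finset.sum_congr rfl fun i _ => ?_
  have e2 : ∀ a' ∈ range N,
      (∑ b' ∈ range M, if A i = a' then (if B i = b' then
        (if a ≤ a' ∧ b ≤ b' then w i else 0) else 0) else 0)
      = if A i = a' then (∑ b' ∈ range M, if B i = b' then
          (if a ≤ a' ∧ b ≤ b' then w i else 0) else 0) else 0 := by
    intro a' _
    by_cases h1 : A i = a' <;> simp [h1]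
  rw [Finset.sum_congr rfl e2,
    Finset.sum_ite_eq (range N) (A i), if_pos (mem_range.mpr (hA i)),
    Finset.sum_ite_eq (range M) (B i), if_pos (mem_range.mpr (hB i))]

lemma sum_c_rho (N M K : ℕ) (c : ℕ → ℕ → ℝ) (A B : ℕ → ℕ) (w : ℕ → ℝ)
    (hA : ∀ i, A i < N) (hB : ∀ i, B i < M) :
    (∑ a ∈ range N, ∑ b ∈ range M, c a b * rhoM K A B w a b)
      = ∑ i ∈ range K, w i * c (A i) (B i) := by
  classical
  unfold rhoM
  have e1 : ∀ a' ∈ range N, ∀ b' ∈ range M,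
      (c a' b' * ∑ i ∈ range K, if A i = a' ∧ B i = b' then w i else 0)
      = ∑ i ∈ range K, (if A i = a' then (if B i = b' then w i * c a' b' else 0) else 0) := by
    intro a' _ b' _
    rw [Finset.mul_sum]
    refine Finset.sum_congr rfl fun i _ => ?_
    by_cases h1 : A i = a'
    · by_cases h2 : B i = b' <;> simp [h1, h2] <;> ring
    · simp [h1]
  rw [Finset.sum_congr rfl fun a' ha' =>
    Finset.sum_congr rfl fun b' hb' => e1 a' ha' b' hb', swap3]
  refine Finset.sum_congr rfl fun i _ => ?_
  have e2 : ∀ a' ∈ range N,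
      (∑ b' ∈ range M, if A i = a' then (if B i = b' then w i * c a' b' else 0) else 0)
      = if A i = a' then (∑ b' ∈ range M, if B i = b' then w i * c a' b' else 0) else 0 := by
    intro a' _
    by_cases h1 : A i = a' <;> simp [h1]
  rw [Finset.sum_congr rfl e2,
    Finset.sum_ite_eq (range N) (A i), if_pos (mem_range.mpr (hA i)),
    Finset.sum_ite_eq (range M) (B i), if_pos (mem_range.mpr (hB i))]

lemma rho_tri (K : ℕ) (A B : ℕ → ℕ) (w : ℕ → ℝ) (hAB : ∀ i, A i ≤ B i) :
    ∀ a b, b < a → rhoM K A B w a b = 0 := by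
  intro a b hba
  refine Finset.sum_eq_zero fun i _ => if_neg ?_
  rintro ⟨rfl, rfl⟩
  exact absurd (hAB i) (by omega)

end Rho

section QuantSums

variable [Fintype D] [NeZero n] [NeZero m] {y : DikePoint T n m D}

lemma Sde_mem_Vset (hy : memQ y) (t : Fin (T+1)) (d : D) (a : ℕ) :
    Sde y t d a ∈ Vset y := by
  unfold Sde
  split_ifs
  · exact Sd_mem_Vset y t d _
  · exact zero_mem_Vset y

lemma Sbe_mem_Vset (hy : memQ y) (t : Fin (T+1)) (b : ℕ) :
    Sbe y t b ∈ Vset y := by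
  unfold Sbe
  split_ifs
  · exact Sb_mem_Vset y t _
  · exact zero_mem_Vset y

lemma le_qA_val_iff (hy : memQ y) (i : ℕ) (hi : i < kV y - 1) (t : Fin (T+1)) (d : D)
    {a : ℕ} (ha : a < n) :
    a ≤ (qA y (Efun y (i+1)) t d).val ↔ Efun y (i+1) ≤ Sde y t d a := by
  unfold Sde
  rw [dif_pos ha, ← le_qA_iff hy (Efun_le_one hy (i+1)) t d ⟨a, ha⟩, Fin.le_def]

lemma le_qG_val_iff (hy : memQ y) (i : ℕ) (hi : i < kV y - 1) (t : Fin (T+1))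
    {b : ℕ} (hb : b < m) :
    b ≤ (qG y (Efun y (i+1)) t).val ↔ Efun y (i+1) ≤ Sbe y t b := by
  unfold Sbe
  rw [dif_pos hb, ← le_qG_iff hy (Efun_le_one hy (i+1)) t ⟨b, hb⟩, Fin.le_def]

/-- Marginal of the quantile mixture: dike component. -/
lemma sum_ind_qA (hy : memQ y) (t : Fin (T+1)) (d : D) (a : ℕ) :
    (∑ i ∈ range (kV y - 1), if a ≤ (qA y (Efun y (i+1)) t d).val
        then Efun y (i+1) - Efun y i else 0)
      = Sde y t d a := by
  classical
  by_cases ha : a < n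
  · exact key_sum_ind hy _ (Sde_mem_Vset hy t d a) _
      (fun i hi => le_qA_val_iff hy i hi t d ha)
  · rw [show Sde y t d a = 0 from dif_neg ha]
    refine Finset.sum_eq_zero fun i _ => if_neg ?_
    have := (qA y (Efun y (i+1)) t d).isLt
    omega

lemma sum_ind_qG (hy : memQ y) (t : Fin (T+1)) (b : ℕ) :
    (∑ i ∈ range (kV y - 1), if b ≤ (qG y (Efun y (i+1)) t).val
        then Efun y (i+1) - Efun y i else 0)
      = Sbe y t b := by
  classical
  by_cases hb : b < m
  · exact key_sum_ind hy _ (Sbe_mem_Vset hy t b) _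
      (fun i hi => le_qG_val_iff hy i hi t hb)
  · rw [show Sbe y t b = 0 from dif_neg hb]
    refine Finset.sum_eq_zero fun i _ => if_neg ?_
    have := (qG y (Efun y (i+1)) t).isLt
    omega

lemma min_mem_Vset (y : DikePoint T n m D) {s s' : ℝ} (hs : s ∈ Vset y) (hs' : s' ∈ Vset y) :
    min s s' ∈ Vset y := by
  rcases le_total s s' with h | h
  · rwa [min_eq_left h]
  · rwa [min_eq_right h]

/-- Joint tail of the quantile mixture: two dike marginals. -/
lemma sum_ind_qA_qA (hy : memQ y) (t1 t2 : Fin (T+1)) (d : D) {a b : ℕ}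
    (ha : a < n) (hb : b < n) :
    (∑ i ∈ range (kV y - 1), if a ≤ (qA y (Efun y (i+1)) t1 d).val
        ∧ b ≤ (qA y (Efun y (i+1)) t2 d).val then Efun y (i+1) - Efun y i else 0)
      = min (Sde y t1 d a) (Sde y t2 d b) := by
  classical
  refine key_sum_ind hy _ (min_mem_Vset y (Sde_mem_Vset hy t1 d a) (Sde_mem_Vset hy t2 d b))
    _ (fun i hi => ?_)
  rw [le_min_iff, le_qA_val_iff hy i hi t1 d ha, le_qA_val_iff hy i hi t2 d hb]

lemma sum_ind_qG_qG (hy : memQ y) (t1 t2 : Fin (T+1)) {a b : ℕ}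
    (ha : a < m) (hb : b < m) :
    (∑ i ∈ range (kV y - 1), if a ≤ (qG y (Efun y (i+1)) t1).val
        ∧ b ≤ (qG y (Efun y (i+1)) t2).val then Efun y (i+1) - Efun y i else 0)
      = min (Sbe y t1 a) (Sbe y t2 b) := by
  classical
  refine key_sum_ind hy _ (min_mem_Vset y (Sbe_mem_Vset hy t1 a) (Sbe_mem_Vset hy t2 b))
    _ (fun i hi => ?_)
  rw [le_min_iff, le_qG_val_iff hy i hi t1 ha, le_qG_val_iff hy i hi t2 hb]

lemma sum_ind_qA_qG (hy : memQ y) (t : Fin (T+1)) (d : D) {a b : ℕ}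
    (ha : a < n) (hb : b < m) :
    (∑ i ∈ range (kV y - 1), if a ≤ (qA y (Efun y (i+1)) t d).val
        ∧ b ≤ (qG y (Efun y (i+1)) t).val then Efun y (i+1) - Efun y i else 0)
      = min (Sde y t d a) (Sbe y t b) := by
  classical
  refine key_sum_ind hy _ (min_mem_Vset y (Sde_mem_Vset hy t d a) (Sbe_mem_Vset hy t b))
    _ (fun i hi => ?_)
  rw [le_min_iff, le_qA_val_iff hy i hi t d ha, le_qG_val_iff hy i hi t hb]

end QuantSums


section PieceBounds

variable [Fintype D] [NeZero n] [NeZero m] {y : DikePoint T n m D}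

lemma nonpos_mul_nonpos {x z : ℝ} (hx : x ≤ 0) (hz : z ≤ 0) : 0 ≤ x * z := by
  calc (0:ℝ) ≤ (-x) * (-z) := mul_nonneg (neg_nonneg.mpr hx) (neg_nonneg.mpr hz)
    _ = x * z := by ring

lemma piece_CY_bound (hy : memQ y) (t : Fin (T+1)) (d : D) (cost : Fin n → Fin n → ℝ)
    (hM : ∀ h1 h1' h2 h2' : Fin n, h1 ≤ h1' → h1' ≤ h2 → h2 ≤ h2' →
      cost h1 h2 + cost h1' h2' ≤ cost h1 h2' + cost h1' h2) :
    (∑ i ∈ range (kV y - 1), (Efun y (i+1) - Efun y i) *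
        cost (qA y (Efun y (i+1)) (prev T t) d) (qA y (Efun y (i+1)) t d))
      ≤ ∑ h2 : Fin n, ∑ h1 ∈ Iic h2, cost h1 h2 * y.CY t d h1 h2 := by
  classical
  have hA1lt : ∀ i : ℕ, ((qA y (Efun y (i+1)) (prev T t) d).val) < n :=
    fun i => (qA y (Efun y (i+1)) (prev T t) d).isLt
  have hA2lt : ∀ i : ℕ, ((qA y (Efun y (i+1)) t d).val) < n :=
    fun i => (qA y (Efun y (i+1)) t d).isLt
  have hA12 : ∀ i : ℕ, ((qA y (Efun y (i+1)) (prev T t) d).val)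
      ≤ ((qA y (Efun y (i+1)) t d).val) :=
    fun i => qA_prev_le hy (Efun_le_one hy (i+1)) t d
  rw [sum_tri_to_range cost (y.CY t d) (fun h1 h2 h => hy.2.2.2.1 t d h1 h2 h)]
  have hLHS : (∑ i ∈ range (kV y - 1), (Efun y (i+1) - Efun y i) *
        cost (qA y (Efun y (i+1)) (prev T t) d) (qA y (Efun y (i+1)) t d))
      = ∑ a ∈ range n, ∑ b ∈ range n, ext n n cost a b *
          rhoM (kV y - 1) (fun i => (qA y (Efun y (i+1)) (prev T t) d).val)
            (fun i => (qA y (Efun y (i+1)) t d).val)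
            (fun i => Efun y (i+1) - Efun y i) a b := by
    rw [sum_c_rho n n (kV y - 1) (ext n n cost) (fun i => (qA y (Efun y (i+1)) (prev T t) d).val) (fun i => (qA y (Efun y (i+1)) t d).val) (fun i => Efun y (i+1) - Efun y i) hA1lt hA2lt]
    refine Finset.sum_congr rfl fun i _ => ?_
    congr 1
    unfold ext
    rw [dif_pos ⟨hA1lt i, hA2lt i⟩, Fin.eta, Fin.eta]
  rw [hLHS]
  have hrq := Psum_rho n n (kV y - 1) (fun i => (qA y (Efun y (i+1)) (prev T t) d).val) (fun i => (qA y (Efun y (i+1)) t d).val) (fun i => Efun y (i+1) - Efun y i) hA1lt hA2lt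
  have hmar1 : ∀ a, Psum n n (ext n n (y.CY t d)) a 0
      = Psum n n (rhoM (kV y - 1) (fun i => (qA y (Efun y (i+1)) (prev T t) d).val) (fun i => (qA y (Efun y (i+1)) t d).val) (fun i => Efun y (i+1) - Efun y i)) a 0 := by
    intro a
    rw [PsumCY_a hy t d a, hrq a 0, ← sum_ind_qA hy (prev T t) d a]
    exact Finset.sum_congr rfl fun i _ => if_congr (by simp [Nat.zero_le]) rfl rfl
  have hmar2 : ∀ b, Psum n n (ext n n (y.CY t d)) 0 b
      = Psum n n (rhoM (kV y - 1) (fun i => (qA y (Efun y (i+1)) (prev T t) d).val) (fun i => (qA y (Efun y (i+1)) t d).val) (fun i => Efun y (i+1) - Efun y i)) 0 b := by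
    intro b
    rw [PsumCY_b hy t d b, hrq 0 b, ← sum_ind_qA hy t d b]
    exact Finset.sum_congr rfl fun i _ => if_congr (by simp [Nat.zero_le]) rfl rfl
  refine monge n n (ext n n cost) (ext n n (y.CY t d)) _ hmar1 hmar2 ?_
  intro a b h1a han h1b hbn
  by_cases hba : b ≤ a
  · rw [Psum_tri_left n _ (extCY_tri hy t d) hba,
      Psum_tri_left n _ (rho_tri (kV y - 1) (fun i => (qA y (Efun y (i+1)) (prev T t) d).val) (fun i => (qA y (Efun y (i+1)) t d).val) (fun i => Efun y (i+1) - Efun y i) hA12) hba, hmar1 a, sub_self, mul_zero]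
  · push_neg at hba
    have hΔ : ext n n cost a b - ext n n cost (a-1) b - ext n n cost a (b-1)
        + ext n n cost (a-1) (b-1) ≤ 0 := by
      unfold ext
      rw [dif_pos ⟨han, hbn⟩, dif_pos ⟨by omega, hbn⟩, dif_pos ⟨han, by omega⟩,
        dif_pos ⟨(by omega : a - 1 < n), (by omega : b - 1 < n)⟩]
      have := hM ⟨a-1, by omega⟩ ⟨a, han⟩ ⟨b-1, by omega⟩ ⟨b, hbn⟩
        (Fin.mk_le_mk.mpr (by omega)) (Fin.mk_le_mk.mpr (by omega))
        (Fin.mk_le_mk.mpr (by omega))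
      linarith
    have hπρ : Psum n n (ext n n (y.CY t d)) a b
        ≤ Psum n n (rhoM (kV y - 1) (fun i => (qA y (Efun y (i+1)) (prev T t) d).val) (fun i => (qA y (Efun y (i+1)) t d).val) (fun i => Efun y (i+1) - Efun y i)) a b := by
      rw [hrq a b, sum_ind_qA_qA hy (prev T t) t d han hbn]
      refine le_min ?_ ?_
      · calc Psum n n (ext n n (y.CY t d)) a b
            ≤ Psum n n (ext n n (y.CY t d)) a 0 :=
              Psum_mono n n _ (ext_nonneg _ (fun p q => (hy.1 t d p q).1)) le_rfl
                (Nat.zero_le b)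
          _ = Sde y (prev T t) d a := PsumCY_a hy t d a
      · calc Psum n n (ext n n (y.CY t d)) a b
            ≤ Psum n n (ext n n (y.CY t d)) 0 b :=
              Psum_mono n n _ (ext_nonneg _ (fun p q => (hy.1 t d p q).1))
                (Nat.zero_le a) le_rfl
          _ = Sde y t d b := PsumCY_b hy t d b
    exact nonpos_mul_nonpos hΔ (by linarith)

lemma piece_B_bound (hy : memQ y) (t : Fin (T+1)) (cost : Fin m → Fin m → ℝ)
    (hM : ∀ g1 g1' g2 g2' : Fin m, g1 ≤ g1' → g1' ≤ g2 → g2 ≤ g2' →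
      cost g1 g2 + cost g1' g2' ≤ cost g1 g2' + cost g1' g2) :
    (∑ i ∈ range (kV y - 1), (Efun y (i+1) - Efun y i) *
        cost (qG y (Efun y (i+1)) (prev T t)) (qG y (Efun y (i+1)) t))
      ≤ ∑ g2 : Fin m, ∑ g1 ∈ Iic g2, cost g1 g2 * y.B t g1 g2 := by
  classical
  have hA1lt : ∀ i : ℕ, ((qG y (Efun y (i+1)) (prev T t)).val) < m :=
    fun i => (qG y (Efun y (i+1)) (prev T t)).isLt
  have hA2lt : ∀ i : ℕ, ((qG y (Efun y (i+1)) t).val) < m :=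
    fun i => (qG y (Efun y (i+1)) t).isLt
  have hA12 : ∀ i : ℕ, ((qG y (Efun y (i+1)) (prev T t)).val)
      ≤ ((qG y (Efun y (i+1)) t).val) :=
    fun i => qG_prev_le hy (Efun_le_one hy (i+1)) t
  rw [sum_tri_to_range cost (y.B t) (fun g1 g2 h => hy.2.2.2.2.1 t g1 g2 h)]
  have hLHS : (∑ i ∈ range (kV y - 1), (Efun y (i+1) - Efun y i) *
        cost (qG y (Efun y (i+1)) (prev T t)) (qG y (Efun y (i+1)) t))
      = ∑ a ∈ range m, ∑ b ∈ range m, ext m m cost a b *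
          rhoM (kV y - 1) (fun i => (qG y (Efun y (i+1)) (prev T t)).val)
            (fun i => (qG y (Efun y (i+1)) t).val)
            (fun i => Efun y (i+1) - Efun y i) a b := by
    rw [sum_c_rho m m (kV y - 1) (ext m m cost) (fun i => (qG y (Efun y (i+1)) (prev T t)).val) (fun i => (qG y (Efun y (i+1)) t).val) (fun i => Efun y (i+1) - Efun y i) hA1lt hA2lt]
    refine Finset.sum_congr rfl fun i _ => ?_
    congr 1
    unfold ext
    rw [dif_pos ⟨hA1lt i, hA2lt i⟩, Fin.eta, Fin.eta]
  rw [hLHS]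
  have hrq := Psum_rho m m (kV y - 1) (fun i => (qG y (Efun y (i+1)) (prev T t)).val) (fun i => (qG y (Efun y (i+1)) t).val) (fun i => Efun y (i+1) - Efun y i) hA1lt hA2lt
  have hmar1 : ∀ a, Psum m m (ext m m (y.B t)) a 0
      = Psum m m (rhoM (kV y - 1) (fun i => (qG y (Efun y (i+1)) (prev T t)).val) (fun i => (qG y (Efun y (i+1)) t).val) (fun i => Efun y (i+1) - Efun y i)) a 0 := by
    intro a
    rw [PsumB_a hy t a, hrq a 0, ← sum_ind_qG hy (prev T t) a]
    exact Finset.sum_congr rfl fun i _ => if_congr (by simp [Nat.zero_le]) rfl rfl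
  have hmar2 : ∀ b, Psum m m (ext m m (y.B t)) 0 b
      = Psum m m (rhoM (kV y - 1) (fun i => (qG y (Efun y (i+1)) (prev T t)).val) (fun i => (qG y (Efun y (i+1)) t).val) (fun i => Efun y (i+1) - Efun y i)) 0 b := by
    intro b
    rw [PsumB_b hy t b, hrq 0 b, ← sum_ind_qG hy t b]
    exact Finset.sum_congr rfl fun i _ => if_congr (by simp [Nat.zero_le]) rfl rfl
  refine monge m m (ext m m cost) (ext m m (y.B t)) _ hmar1 hmar2 ?_
  intro a b h1a ham h1b hbm
  by_cases hba : b ≤ a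
  · rw [Psum_tri_left m _ (extB_tri hy t) hba,
      Psum_tri_left m _ (rho_tri (kV y - 1) (fun i => (qG y (Efun y (i+1)) (prev T t)).val) (fun i => (qG y (Efun y (i+1)) t).val) (fun i => Efun y (i+1) - Efun y i) hA12) hba, hmar1 a, sub_self, mul_zero]
  · push_neg at hba
    have hΔ : ext m m cost a b - ext m m cost (a-1) b - ext m m cost a (b-1)
        + ext m m cost (a-1) (b-1) ≤ 0 := by
      unfold ext
      rw [dif_pos ⟨ham, hbm⟩, dif_pos ⟨by omega, hbm⟩, dif_pos ⟨ham, by omega⟩,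
        dif_pos ⟨(by omega : a - 1 < m), (by omega : b - 1 < m)⟩]
      have := hM ⟨a-1, by omega⟩ ⟨a, ham⟩ ⟨b-1, by omega⟩ ⟨b, hbm⟩
        (Fin.mk_le_mk.mpr (by omega)) (Fin.mk_le_mk.mpr (by omega))
        (Fin.mk_le_mk.mpr (by omega))
      linarith
    have hπρ : Psum m m (ext m m (y.B t)) a b
        ≤ Psum m m (rhoM (kV y - 1) (fun i => (qG y (Efun y (i+1)) (prev T t)).val) (fun i => (qG y (Efun y (i+1)) t).val) (fun i => Efun y (i+1) - Efun y i)) a b := by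
      rw [hrq a b, sum_ind_qG_qG hy (prev T t) t ham hbm]
      refine le_min ?_ ?_
      · calc Psum m m (ext m m (y.B t)) a b
            ≤ Psum m m (ext m m (y.B t)) a 0 :=
              Psum_mono m m _ (ext_nonneg _ (fun p q => (hy.2.1 t p q).1)) le_rfl
                (Nat.zero_le b)
          _ = Sbe y (prev T t) a := PsumB_a hy t a
      · calc Psum m m (ext m m (y.B t)) a b
            ≤ Psum m m (ext m m (y.B t)) 0 b :=
              Psum_mono m m _ (ext_nonneg _ (fun p q => (hy.2.1 t p q).1))
                (Nat.zero_le a) le_rfl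
          _ = Sbe y t b := PsumB_b hy t b
    exact nonpos_mul_nonpos hΔ (by linarith)

lemma piece_DY_bound (hy : memQ y) (t : Fin (T+1)) (d : D) (cost : Fin n → Fin m → ℝ)
    (hM : ∀ (h h' : Fin n) (g g' : Fin m), h ≤ h' → g ≤ g' →
      cost h g + cost h' g' ≤ cost h' g + cost h g') :
    (∑ i ∈ range (kV y - 1), (Efun y (i+1) - Efun y i) *
        cost (qA y (Efun y (i+1)) t d) (qG y (Efun y (i+1)) t))
      ≤ ∑ h : Fin n, ∑ g : Fin m, cost h g * y.DY t d h g := by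
  classical
  have hA1lt : ∀ i : ℕ, ((qA y (Efun y (i+1)) t d).val) < n :=
    fun i => (qA y (Efun y (i+1)) t d).isLt
  have hA2lt : ∀ i : ℕ, ((qG y (Efun y (i+1)) t).val) < m :=
    fun i => (qG y (Efun y (i+1)) t).isLt
  rw [sum_full_to_range cost (y.DY t d)]
  have hLHS : (∑ i ∈ range (kV y - 1), (Efun y (i+1) - Efun y i) *
        cost (qA y (Efun y (i+1)) t d) (qG y (Efun y (i+1)) t))
      = ∑ a ∈ range n, ∑ b ∈ range m, ext n m cost a b *
          rhoM (kV y - 1) (fun i => (qA y (Efun y (i+1)) t d).val)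
            (fun i => (qG y (Efun y (i+1)) t).val)
            (fun i => Efun y (i+1) - Efun y i) a b := by
    rw [sum_c_rho n m (kV y - 1) (ext n m cost) (fun i => (qA y (Efun y (i+1)) t d).val) (fun i => (qG y (Efun y (i+1)) t).val) (fun i => Efun y (i+1) - Efun y i) hA1lt hA2lt]
    refine Finset.sum_congr rfl fun i _ => ?_
    congr 1
    unfold ext
    rw [dif_pos ⟨hA1lt i, hA2lt i⟩, Fin.eta, Fin.eta]
  rw [hLHS]
  have hrq := Psum_rho n m (kV y - 1) (fun i => (qA y (Efun y (i+1)) t d).val) (fun i => (qG y (Efun y (i+1)) t).val) (fun i => Efun y (i+1) - Efun y i) hA1lt hA2lt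
  have hmar1 : ∀ a, Psum n m (ext n m (y.DY t d)) a 0
      = Psum n m (rhoM (kV y - 1) (fun i => (qA y (Efun y (i+1)) t d).val) (fun i => (qG y (Efun y (i+1)) t).val) (fun i => Efun y (i+1) - Efun y i)) a 0 := by
    intro a
    rw [PsumDY_a hy t d a, hrq a 0, ← sum_ind_qA hy t d a]
    exact Finset.sum_congr rfl fun i _ => if_congr (by simp [Nat.zero_le]) rfl rfl
  have hmar2 : ∀ b, Psum n m (ext n m (y.DY t d)) 0 b
      = Psum n m (rhoM (kV y - 1) (fun i => (qA y (Efun y (i+1)) t d).val) (fun i => (qG y (Efun y (i+1)) t).val) (fun i => Efun y (i+1) - Efun y i)) 0 b := by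
    intro b
    rw [PsumDY_b hy t d b, hrq 0 b, ← sum_ind_qG hy t b]
    exact Finset.sum_congr rfl fun i _ => if_congr (by simp [Nat.zero_le]) rfl rfl
  refine monge n m (ext n m cost) (ext n m (y.DY t d)) _ hmar1 hmar2 ?_
  intro a b h1a han h1b hbm
  have hΔ : ext n m cost a b - ext n m cost (a-1) b - ext n m cost a (b-1)
      + ext n m cost (a-1) (b-1) ≤ 0 := by
    unfold ext
    rw [dif_pos ⟨han, hbm⟩, dif_pos ⟨by omega, hbm⟩, dif_pos ⟨han, by omega⟩,
      dif_pos ⟨(by omega : a - 1 < n), (by omega : b - 1 < m)⟩]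
    have := hM ⟨a-1, by omega⟩ ⟨a, han⟩ ⟨b-1, by omega⟩ ⟨b, hbm⟩
      (Fin.mk_le_mk.mpr (by omega)) (Fin.mk_le_mk.mpr (by omega))
    linarith
  have hπρ : Psum n m (ext n m (y.DY t d)) a b
      ≤ Psum n m (rhoM (kV y - 1) (fun i => (qA y (Efun y (i+1)) t d).val) (fun i => (qG y (Efun y (i+1)) t).val) (fun i => Efun y (i+1) - Efun y i)) a b := by
    rw [hrq a b, sum_ind_qA_qG hy t d han hbm]
    refine le_min ?_ ?_
    · calc Psum n m (ext n m (y.DY t d)) a b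
          ≤ Psum n m (ext n m (y.DY t d)) a 0 :=
            Psum_mono n m _ (ext_nonneg _ (fun p q => (hy.2.2.1 t d p q).1)) le_rfl
              (Nat.zero_le b)
        _ = Sde y t d a := PsumDY_a hy t d a
    · calc Psum n m (ext n m (y.DY t d)) a b
          ≤ Psum n m (ext n m (y.DY t d)) 0 b :=
            Psum_mono n m _ (ext_nonneg _ (fun p q => (hy.2.2.1 t d p q).1))
              (Nat.zero_le a) le_rfl
        _ = Sbe y t b := PsumDY_b hy t d b
  exact nonpos_mul_nonpos hΔ (by linarith)

end PieceBounds


section Main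

variable [Fintype D] [NeZero n] [NeZero m]

lemma exists_integral_min (F : DikePoint T n m D → ℝ) :
    ∃ x : DikePoint T n m D, (memQ x ∧ isIntegral x) ∧
      ∀ z : DikePoint T n m D, memQ z → isIntegral z → F x ≤ F z := by
  classical
  set S : Set (DikePoint T n m D) := {x | memQ x ∧ isIntegral x} with hS
  have hne : S.Nonempty :=
    ⟨mkPath (fun _ _ => 0) (fun _ => 0),
      mkPath_memQ _ _ (fun d => rfl) rfl (fun t d => le_rfl) (fun t => le_rfl),
      mkPath_isIntegral _ _⟩
  have hfin : S.Finite := by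
    set Φ : DikePoint T n m D →
        (Fin (T+1) → D → Fin n → Fin n → Bool) × (Fin (T+1) → Fin m → Fin m → Bool) ×
          (Fin (T+1) → D → Fin n → Fin m → Bool) :=
      fun x => (fun t d h1 h2 => decide (x.CY t d h1 h2 = 1),
        fun t g1 g2 => decide (x.B t g1 g2 = 1),
        fun t d h g => decide (x.DY t d h g = 1)) with hΦ
    have hinj : Set.InjOn Φ S := by
      rintro x ⟨-, hx⟩ z ⟨-, hz⟩ he
      have hc : ∀ (u v : ℝ), (u = 0 ∨ u = 1) → (v = 0 ∨ v = 1) →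
          decide (u = 1) = decide (v = 1) → u = v := by
        intro u v hu hv hd
        rcases hu with rfl | rfl <;> rcases hv with rfl | rfl <;> simp_all
      simp only [hΦ, Prod.mk.injEq] at he
      obtain ⟨he1, he2, he3⟩ := he
      obtain ⟨c1, b1, e1⟩ := x
      obtain ⟨c2, b2, e2⟩ := z
      simp only [DikePoint.mk.injEq]
      refine ⟨?_, ?_, ?_⟩
      · funext t d h1 h2
        exact hc _ _ (hx.1 t d h1 h2) (hz.1 t d h1 h2)
          (congrFun (congrFun (congrFun (congrFun he1 t) d) h1) h2)
      · funext t g1 g2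
        exact hc _ _ (hx.2.1 t g1 g2) (hz.2.1 t g1 g2)
          (congrFun (congrFun (congrFun he2 t) g1) g2)
      · funext t d h g
        exact hc _ _ (hx.2.2 t d h g) (hz.2.2 t d h g)
          (congrFun (congrFun (congrFun (congrFun he3 t) d) h) g)
    exact Set.Finite.of_finite_image (Set.toFinite (Φ '' S)) hinj
  obtain ⟨x, hxS, hmin⟩ := Set.exists_min_image S F hfin hne
  exact ⟨x, hxS, fun z hz1 hz2 => hmin z ⟨hz1, hz2⟩⟩

lemma sum_mul_swap1 {α : Type*} (s : Finset α) (K : ℕ) (w : ℕ → ℝ) (F : α → ℕ → ℝ) :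
    (∑ i ∈ range K, w i * ∑ t ∈ s, F t i) = ∑ t ∈ s, ∑ i ∈ range K, w i * F t i := by
  calc (∑ i ∈ range K, w i * ∑ t ∈ s, F t i)
      = ∑ i ∈ range K, ∑ t ∈ s, w i * F t i :=
        Finset.sum_congr rfl fun i _ => Finset.mul_sum _ _ _
    _ = ∑ t ∈ s, ∑ i ∈ range K, w i * F t i := Finset.sum_comm

lemma sum_mul_swap2 {α β : Type*} (s : Finset α) (s2 : Finset β) (K : ℕ) (w : ℕ → ℝ)
    (F : α → β → ℕ → ℝ) :
    (∑ i ∈ range K, w i * ∑ t ∈ s, ∑ d ∈ s2, F t d i)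
      = ∑ t ∈ s, ∑ d ∈ s2, ∑ i ∈ range K, w i * F t d i := by
  rw [sum_mul_swap1 s K w (fun t i => ∑ d ∈ s2, F t d i)]
  exact Finset.sum_congr rfl fun t _ => sum_mul_swap1 s2 K w (F t)

end Main

end DikeAux


open DikeAux

/-- Proposition 1: under conditions (i), (ii), (iii) on the
nonnegative cost data, the LP relaxation has an integral optimal solution. -/
theorem statement_3 (T n m : ℕ) (hT : 1 ≤ T) [NeZero n] [NeZero m]
    (D : Type) [Fintype D] [Nonempty D]
    (Dcost : Fin (T + 1) → D → Fin n → Fin n → ℝ)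
    (Dexp : Fin (T + 1) → D → Fin n → Fin m → ℝ)
    (Bcost : Fin (T + 1) → Fin m → Fin m → ℝ)
    (Bexp : Fin (T + 1) → Fin m → ℝ)
    (hDcost : ∀ t d h1 h2, h1 ≤ h2 → 0 ≤ Dcost t d h1 h2)
    (hDexp : ∀ t d h g, 0 ≤ Dexp t d h g)
    (hBcost : ∀ t g1 g2, g1 ≤ g2 → 0 ≤ Bcost t g1 g2)
    (hBexp : ∀ t g, 0 ≤ Bexp t g)
    (hi : condI Dexp) (hii : condII Bcost) (hiii : condIII Dcost) :
    ∃ x : DikePoint T n m D, memQ x ∧ isIntegral x ∧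
      ∀ y : DikePoint T n m D, memQ y →
        obj Dcost Dexp Bcost Bexp x ≤ obj Dcost Dexp Bcost Bexp y := by
  classical
  obtain ⟨x, ⟨hxQ, hxI⟩, hxmin⟩ :=
    DikeAux.exists_integral_min (T := T) (n := n) (m := m) (D := D)
      (obj Dcost Dexp Bcost Bexp)
  refine ⟨x, hxQ, hxI, fun y hy => ?_⟩
  have hw : ∀ i : ℕ, 0 ≤ Efun y (i+1) - Efun y i :=
    fun i => sub_nonneg.mpr (Efun_mono y (Nat.le_succ i))
  have hXQ : ∀ i ∈ range (kV y - 1),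
      memQ (mkPath (D := D) (fun t' d => qA y (Efun y (i+1)) t' d)
        (fun t' => qG y (Efun y (i+1)) t')) := by
    intro i hmem
    exact mkPath_memQ _ _
      (fun d => qA_zero hy (Efun_pos hy i (mem_range.mp hmem)) (Efun_le_one hy _) d)
      (qG_zero hy (Efun_pos hy i (mem_range.mp hmem)) (Efun_le_one hy _))
      (fun t' d => qA_prev_le hy (Efun_le_one hy _) t' d)
      (fun t' => qG_prev_le hy (Efun_le_one hy _) t')
  have hobjXi : ∀ i ∈ range (kV y - 1),
      obj Dcost Dexp Bcost Bexp (mkPath (D := D) (fun t' d => qA y (Efun y (i+1)) t' d)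
        (fun t' => qG y (Efun y (i+1)) t'))
      = (∑ t, ∑ d, Dcost t d (qA y (Efun y (i+1)) (prev T t) d) (qA y (Efun y (i+1)) t d))
        + (∑ t, ∑ d, Dexp t d (qA y (Efun y (i+1)) t d) (qG y (Efun y (i+1)) t))
        + (∑ t, (Bcost t (qG y (Efun y (i+1)) (prev T t)) (qG y (Efun y (i+1)) t)
            + Bexp t (qG y (Efun y (i+1)) t))) := by
    intro i hmem
    unfold obj
    congr 1
    · congr 1
      · exact Finset.sum_congr rfl fun t _ => Finset.sum_congr rfl fun d _ =>
          pieceC_mkPath (Dcost t d) _ _ (qA_prev_le hy (Efun_le_one hy _) t d)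
      · exact Finset.sum_congr rfl fun t _ => Finset.sum_congr rfl fun d _ =>
          pieceF_mkPath (Dexp t d) _ _
    · exact Finset.sum_congr rfl fun t _ =>
        pieceC_mkPath (fun g1 g2 => Bcost t g1 g2 + Bexp t g2) _ _
          (qG_prev_le hy (Efun_le_one hy _) t)
  calc obj Dcost Dexp Bcost Bexp x
      = (∑ i ∈ range (kV y - 1), (Efun y (i+1) - Efun y i)) *
          obj Dcost Dexp Bcost Bexp x := by
        rw [sum_weights hy, one_mul]
    _ = ∑ i ∈ range (kV y - 1), (Efun y (i+1) - Efun y i) *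
          obj Dcost Dexp Bcost Bexp x := Finset.sum_mul _ _ _
    _ ≤ ∑ i ∈ range (kV y - 1), (Efun y (i+1) - Efun y i) *
          obj Dcost Dexp Bcost Bexp (mkPath (D := D)
            (fun t' d => qA y (Efun y (i+1)) t' d)
            (fun t' => qG y (Efun y (i+1)) t')) :=
        Finset.sum_le_sum fun i hmem => mul_le_mul_of_nonneg_left
          (hxmin _ (hXQ i hmem) (mkPath_isIntegral _ _)) (hw i)
    _ = ∑ i ∈ range (kV y - 1), (Efun y (i+1) - Efun y i) *
          ((∑ t, ∑ d, Dcost t d (qA y (Efun y (i+1)) (prev T t) d) (qA y (Efun y (i+1)) t d))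
            + (∑ t, ∑ d, Dexp t d (qA y (Efun y (i+1)) t d) (qG y (Efun y (i+1)) t))
            + (∑ t, (Bcost t (qG y (Efun y (i+1)) (prev T t)) (qG y (Efun y (i+1)) t)
                + Bexp t (qG y (Efun y (i+1)) t)))) :=
        Finset.sum_congr rfl fun i hmem => by rw [hobjXi i hmem]
    _ = (∑ i ∈ range (kV y - 1), (Efun y (i+1) - Efun y i) *
            (∑ t, ∑ d, Dcost t d (qA y (Efun y (i+1)) (prev T t) d) (qA y (Efun y (i+1)) t d)))
        + (∑ i ∈ range (kV y - 1), (Efun y (i+1) - Efun y i) *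
            (∑ t, ∑ d, Dexp t d (qA y (Efun y (i+1)) t d) (qG y (Efun y (i+1)) t)))
        + (∑ i ∈ range (kV y - 1), (Efun y (i+1) - Efun y i) *
            (∑ t, (Bcost t (qG y (Efun y (i+1)) (prev T t)) (qG y (Efun y (i+1)) t)
                + Bexp t (qG y (Efun y (i+1)) t)))) := by
        rw [← Finset.sum_add_distrib, ← Finset.sum_add_distrib]
        exact Finset.sum_congr rfl fun i _ => by ring
    _ = (∑ t, ∑ d, ∑ i ∈ range (kV y - 1), (Efun y (i+1) - Efun y i) *
            Dcost t d (qA y (Efun y (i+1)) (prev T t) d) (qA y (Efun y (i+1)) t d))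
        + (∑ t, ∑ d, ∑ i ∈ range (kV y - 1), (Efun y (i+1) - Efun y i) *
            Dexp t d (qA y (Efun y (i+1)) t d) (qG y (Efun y (i+1)) t))
        + (∑ t, ∑ i ∈ range (kV y - 1), (Efun y (i+1) - Efun y i) *
            (Bcost t (qG y (Efun y (i+1)) (prev T t)) (qG y (Efun y (i+1)) t)
                + Bexp t (qG y (Efun y (i+1)) t))) := by
        rw [sum_mul_swap2 univ univ (kV y - 1) (fun i => Efun y (i+1) - Efun y i)
            (fun t d i => Dcost t d (qA y (Efun y (i+1)) (prev T t) d)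
              (qA y (Efun y (i+1)) t d)),
          sum_mul_swap2 univ univ (kV y - 1) (fun i => Efun y (i+1) - Efun y i)
            (fun t d i => Dexp t d (qA y (Efun y (i+1)) t d) (qG y (Efun y (i+1)) t)),
          sum_mul_swap1 univ (kV y - 1) (fun i => Efun y (i+1) - Efun y i)
            (fun t i => Bcost t (qG y (Efun y (i+1)) (prev T t)) (qG y (Efun y (i+1)) t)
                + Bexp t (qG y (Efun y (i+1)) t))]
    _ ≤ obj Dcost Dexp Bcost Bexp y := by
        unfold obj
        refine add_le_add (add_le_add ?_ ?_) ?_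
        · exact Finset.sum_le_sum fun t _ => Finset.sum_le_sum fun d _ =>
            piece_CY_bound hy t d (Dcost t d)
              (fun h1 h1' h2 h2' ha hb hc => hiii t d h1 h1' h2 h2' ha hb hc)
        · exact Finset.sum_le_sum fun t _ => Finset.sum_le_sum fun d _ =>
            piece_DY_bound hy t d (Dexp t d)
              (fun h h' g g' ha hb => hi t d h h' g g' ha hb)
        · refine Finset.sum_le_sum fun t _ => piece_B_bound hy t
            (fun g1 g2 => Bcost t g1 g2 + Bexp t g2)
            (fun g1 g1' g2 g2' ha hb hc => ?_)
          have h2 := hii t g1 g1' g2 g2' ha hb hc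
          linarith
end

section
/- (Uncrossing of dike flows.) Let x ∈ Q, let t ∈ {0,…,T}, d ∈ D, and let h1 ≤ h1' ≤ h2 ≤ h2' in H_D. Let ε ≥ 0 satisfy ε ≤ CY(t,d,h1,h2'), ε ≤ CY(t,d,h1',h2), CY(t,d,h1,h2)+ε ≤ 1 and CY(t,d,h1',h2')+ε ≤ 1. Define x' from x by decreasing the coordinates CY(t,d,h1,h2') and CY(t,d,h1',h2) by ε and increasing the coordinates CY(t,d,h1,h2) and CY(t,d,h1',h2') by ε, leaving all other coordinates unchanged. Then x' ∈ Q; moreover, if condition (iii) holds, then obj(x') ≤ obj(x). -/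
open Finset

/-- uncrossing of dike flows: decreasing `CY(t,d,h1,h2')` and
`CY(t,d,h1',h2)` by `ε` and increasing `CY(t,d,h1,h2)` and `CY(t,d,h1',h2')`
by `ε` keeps the point in `Q`, and does not increase the objective if
condition (iii) holds. -/
theorem statement_6 (T n m : ℕ) (hT : 1 ≤ T) [NeZero n] [NeZero m]
    (D : Type) [Fintype D] [Nonempty D] [DecidableEq D]
    (Dcost : Fin (T + 1) → D → Fin n → Fin n → ℝ)
    (Dexp : Fin (T + 1) → D → Fin n → Fin m → ℝ)
    (Bcost : Fin (T + 1) → Fin m → Fin m → ℝ)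
    (Bexp : Fin (T + 1) → Fin m → ℝ)
    (hDcost : ∀ t d h1 h2, h1 ≤ h2 → 0 ≤ Dcost t d h1 h2)
    (hDexp : ∀ t d h g, 0 ≤ Dexp t d h g)
    (hBcost : ∀ t g1 g2, g1 ≤ g2 → 0 ≤ Bcost t g1 g2)
    (hBexp : ∀ t g, 0 ≤ Bexp t g)
    (x : DikePoint T n m D) (hx : memQ x)
    (t : Fin (T + 1)) (d : D) (h1 h1' h2 h2' : Fin n)
    (hh1 : h1 ≤ h1') (hh2 : h1' ≤ h2) (hh3 : h2 ≤ h2')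
    (ε : ℝ) (hε : 0 ≤ ε)
    (he1 : ε ≤ x.CY t d h1 h2') (he2 : ε ≤ x.CY t d h1' h2)
    (he3 : x.CY t d h1 h2 + ε ≤ 1) (he4 : x.CY t d h1' h2' + ε ≤ 1) :
    let x' : DikePoint T n m D :=
      { CY := fun s e a b => x.CY s e a b
          + (if (s, e, a, b) = (t, d, h1, h2) then ε else 0)
          + (if (s, e, a, b) = (t, d, h1', h2') then ε else 0)
          - (if (s, e, a, b) = (t, d, h1, h2') then ε else 0)
          - (if (s, e, a, b) = (t, d, h1', h2) then ε else 0)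
        B := x.B
        DY := x.DY }
    memQ x' ∧ (condIII Dcost →
      obj Dcost Dexp Bcost Bexp x' ≤ obj Dcost Dexp Bcost Bexp x) := by
  intro x'
  have hCY : ∀ s e a b, x'.CY s e a b = x.CY s e a b
      + (if (s, e, a, b) = (t, d, h1, h2) then ε else 0)
      + (if (s, e, a, b) = (t, d, h1', h2') then ε else 0)
      - (if (s, e, a, b) = (t, d, h1, h2') then ε else 0)
      - (if (s, e, a, b) = (t, d, h1', h2) then ε else 0) := fun _ _ _ _ => rfl
  have triv : (∀ s e a b, x'.CY s e a b = x.CY s e a b) →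
      memQ x' ∧ (condIII Dcost →
        obj Dcost Dexp Bcost Bexp x' ≤ obj Dcost Dexp Bcost Bexp x) := by
    intro hfun
    have hx' : x' = x := by
      have hF : x'.CY = x.CY := by
        funext s e a b; exact hfun s e a b
      calc x' = ⟨x'.CY, x'.B, x'.DY⟩ := rfl
        _ = x := by rw [hF]
    rw [hx']
    exact ⟨hx, fun _ => le_rfl⟩
  rcases eq_or_lt_of_le hh1 with heq1 | hlt1
  · refine triv fun s e a b => ?_
    rw [hCY]; subst heq1; ring
  rcases eq_or_lt_of_le hh3 with heq2 | hlt2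
  · refine triv fun s e a b => ?_
    rw [hCY]; subst heq2; ring
  by_cases hez : ε = 0
  · refine triv fun s e a b => ?_
    rw [hCY]; subst hez; simp
  replace hez : 0 < ε := lt_of_le_of_ne hε (Ne.symm hez)
  obtain ⟨b1, b2, b3, s4, s5, i6, i7, i8, i9, c10, l11, c12, l13⟩ := hx
  have hA : h1 ≤ h2 := hh1.trans hh2
  have hB : h1' ≤ h2' := hh2.trans hh3
  have hC : h1 ≤ h2' := hA.trans hh3
  have hD : h1' ≤ h2 := hh2
  have hne1 : h1 ≠ h1' := ne_of_lt hlt1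
  have hne2 : h2 ≠ h2' := ne_of_lt hlt2
  have ht0 : t ≠ 0 := by
    rintro rfl
    have h2pos : (0 : Fin n) < h2 := lt_of_le_of_lt (Fin.zero_le h1) (hlt1.trans_le hh2)
    have := i7 d h1' h2 h2pos
    linarith
  -- key column sums
  have keyc : ∀ (c : ℝ) (p q : Fin n), p ≤ q → ∀ (s : Fin (T+1)) (e : D) (h : Fin n),
      (∑ a ∈ Iic h, if (s, e, a, h) = (t, d, p, q) then c else 0)
        = if s = t ∧ e = d ∧ h = q then c else 0 := by
    intro c p q hpq s e h
    by_cases hs : s = t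
    · by_cases he' : e = d
      · by_cases hq : h = q
        · subst hs; subst he'; subst hq
          simp [Prod.mk.injEq, Finset.sum_ite_eq, Finset.sum_ite_eq',
            Finset.mem_Iic, hpq]
        · simp [Prod.mk.injEq, hq]
      · simp [Prod.mk.injEq, he']
    · simp [Prod.mk.injEq, hs]
  have keyr : ∀ (p q : Fin n), p ≤ q → ∀ (s : Fin (T+1)) (e : D) (h : Fin n),
      (∑ b ∈ Ici h, if (s, e, h, b) = (t, d, p, q) then ε else 0)
        = if s = t ∧ e = d ∧ h = p then ε else 0 := by
    intro p q hpq s e h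
    by_cases hs : s = t
    · by_cases he' : e = d
      · by_cases hp : h = p
        · subst hs; subst he'; subst hp
          simp [Prod.mk.injEq, Finset.sum_ite_eq, Finset.sum_ite_eq',
            Finset.mem_Ici, hpq]
        · simp [Prod.mk.injEq, hp]
      · simp [Prod.mk.injEq, he']
    · simp [Prod.mk.injEq, hs]
  have hsum_col : ∀ (s : Fin (T+1)) (e : D) (h : Fin n),
      ∑ a ∈ Iic h, x'.CY s e a h = ∑ a ∈ Iic h, x.CY s e a h := by
    intro s e h
    simp only [hCY, Finset.sum_sub_distrib, Finset.sum_add_distrib]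
    rw [keyc ε h1 h2 hA, keyc ε h1' h2' hB, keyc ε h1 h2' hC, keyc ε h1' h2 hD]
    ring
  have hsum_row : ∀ (s : Fin (T+1)) (e : D) (h : Fin n),
      ∑ b ∈ Ici h, x'.CY s e h b = ∑ b ∈ Ici h, x.CY s e h b := by
    intro s e h
    simp only [hCY, Finset.sum_sub_distrib, Finset.sum_add_distrib]
    rw [keyr h1 h2 hA, keyr h1' h2' hB, keyr h1 h2' hC, keyr h1' h2 hD]
    ring
  constructor
  · refine ⟨?_, b2, b3, ?_, s5, ?_, ?_, i8, i9, ?_, ?_, c12, ?_⟩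
    · -- box constraints for CY
      intro s e a b
      rw [Set.mem_Icc, hCY]
      by_cases c1 : (s, e, a, b) = (t, d, h1, h2)
      · simp only [Prod.mk.injEq] at c1
        obtain ⟨rfl, rfl, rfl, rfl⟩ := c1
        rw [if_pos rfl, if_neg (by simp [Prod.mk.injEq, hne1, hne2, Ne.symm hne1, Ne.symm hne2]),
          if_neg (by simp [Prod.mk.injEq, hne1, hne2, Ne.symm hne1, Ne.symm hne2]), if_neg (by simp [Prod.mk.injEq, hne1, hne2, Ne.symm hne1, Ne.symm hne2])]
        have hb := Set.mem_Icc.mp (b1 s e a b)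
        exact ⟨by linarith [hb.1], by linarith⟩
      by_cases c2 : (s, e, a, b) = (t, d, h1', h2')
      · simp only [Prod.mk.injEq] at c2
        obtain ⟨rfl, rfl, rfl, rfl⟩ := c2
        rw [if_neg (by simp [Prod.mk.injEq, hne1, hne2, Ne.symm hne1, Ne.symm hne2]), if_pos rfl,
          if_neg (by simp [Prod.mk.injEq, hne1, hne2, Ne.symm hne1, Ne.symm hne2]), if_neg (by simp [Prod.mk.injEq, hne1, hne2, Ne.symm hne1, Ne.symm hne2])]
        have hb := Set.mem_Icc.mp (b1 s e a b)
        exact ⟨by linarith [hb.1], by linarith⟩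
      by_cases c3 : (s, e, a, b) = (t, d, h1, h2')
      · simp only [Prod.mk.injEq] at c3
        obtain ⟨rfl, rfl, rfl, rfl⟩ := c3
        rw [if_neg (by simp [Prod.mk.injEq, hne1, hne2, Ne.symm hne1, Ne.symm hne2]), if_neg (by simp [Prod.mk.injEq, hne1, hne2, Ne.symm hne1, Ne.symm hne2]),
          if_pos rfl, if_neg (by simp [Prod.mk.injEq, hne1, hne2, Ne.symm hne1, Ne.symm hne2])]
        have hb := Set.mem_Icc.mp (b1 s e a b)
        exact ⟨by linarith [he1], by linarith [hb.2]⟩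
      by_cases c4 : (s, e, a, b) = (t, d, h1', h2)
      · simp only [Prod.mk.injEq] at c4
        obtain ⟨rfl, rfl, rfl, rfl⟩ := c4
        rw [if_neg (by simp [Prod.mk.injEq, hne1, hne2, Ne.symm hne1, Ne.symm hne2]), if_neg (by simp [Prod.mk.injEq, hne1, hne2, Ne.symm hne1, Ne.symm hne2]),
          if_neg (by simp [Prod.mk.injEq, hne1, hne2, Ne.symm hne1, Ne.symm hne2]), if_pos rfl]
        have hb := Set.mem_Icc.mp (b1 s e a b)
        exact ⟨by linarith [he2], by linarith [hb.2]⟩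
      · rw [if_neg c1, if_neg c2, if_neg c3, if_neg c4]
        have hb := Set.mem_Icc.mp (b1 s e a b)
        exact ⟨by linarith [hb.1], by linarith [hb.2]⟩
    · -- support
      intro s e a b hab
      have n1 : (s, e, a, b) ≠ (t, d, h1, h2) := by
        intro hcc; simp only [Prod.mk.injEq] at hcc
        obtain ⟨_, _, rfl, rfl⟩ := hcc; exact hab hA
      have n2 : (s, e, a, b) ≠ (t, d, h1', h2') := by
        intro hcc; simp only [Prod.mk.injEq] at hcc
        obtain ⟨_, _, rfl, rfl⟩ := hcc; exact hab hB
      have n3 : (s, e, a, b) ≠ (t, d, h1, h2') := by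
        intro hcc; simp only [Prod.mk.injEq] at hcc
        obtain ⟨_, _, rfl, rfl⟩ := hcc; exact hab hC
      have n4 : (s, e, a, b) ≠ (t, d, h1', h2) := by
        intro hcc; simp only [Prod.mk.injEq] at hcc
        obtain ⟨_, _, rfl, rfl⟩ := hcc; exact hab hD
      rw [hCY, if_neg n1, if_neg n2, if_neg n3, if_neg n4, s4 s e a b hab]
      ring
    · -- initial condition 1 for CY
      intro e
      have n0 : ∀ (p q : Fin n), ((0 : Fin (T+1)), e, (0 : Fin n), (0 : Fin n)) ≠ (t, d, p, q) := by
        intro p q hcc; simp only [Prod.mk.injEq] at hcc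
        exact ht0 hcc.1.symm
      rw [hCY, if_neg (n0 _ _), if_neg (n0 _ _), if_neg (n0 _ _), if_neg (n0 _ _), i6 e]
      ring
    · -- initial condition 2 for CY
      intro e a b hbpos
      have n0 : ∀ (p q : Fin n), ((0 : Fin (T+1)), e, a, b) ≠ (t, d, p, q) := by
        intro p q hcc; simp only [Prod.mk.injEq] at hcc
        exact ht0 hcc.1.symm
      rw [hCY, if_neg (n0 _ _), if_neg (n0 _ _), if_neg (n0 _ _), if_neg (n0 _ _),
        i7 e a b hbpos]
      ring
    · -- flow conservation for CY
      intro tt e h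
      rw [hsum_col, hsum_row]
      exact c10 tt e h
    · -- linking for CY
      intro s e h
      rw [hsum_col]
      exact l11 s e h
    · -- linking for B
      exact l13
  · -- objective
    intro hiii
    have obj_key : ∀ (p q : Fin n), p ≤ q →
        (∑ s, ∑ e, ∑ b, ∑ a ∈ Iic b,
            Dcost s e a b * (if (s, e, a, b) = (t, d, p, q) then ε else 0))
          = Dcost t d p q * ε := by
      intro p q hpq
      have hptw : ∀ (s : Fin (T+1)) (e : D) (b a : Fin n),
          Dcost s e a b * (if (s, e, a, b) = (t, d, p, q) then ε else 0)
            = if (s, e, a, b) = (t, d, p, q) then Dcost t d p q * ε else 0 := by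
        intro s e b a
        split_ifs with hc
        · simp only [Prod.mk.injEq] at hc
          obtain ⟨rfl, rfl, rfl, rfl⟩ := hc; rfl
        · ring
      simp only [hptw]
      have step1 : ∀ (s : Fin (T+1)) (e : D) (b : Fin n),
          (∑ a ∈ Iic b, if (s, e, a, b) = (t, d, p, q) then Dcost t d p q * ε else 0)
            = if s = t ∧ e = d ∧ b = q then Dcost t d p q * ε else 0 :=
        fun s e b => keyc (Dcost t d p q * ε) p q hpq s e b
      simp only [step1]
      have step2 : ∀ (s : Fin (T+1)) (e : D),
          (∑ b : Fin n, if s = t ∧ e = d ∧ b = q then Dcost t d p q * ε else 0)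
            = if s = t ∧ e = d then Dcost t d p q * ε else 0 := by
        intro s e
        by_cases hc : s = t ∧ e = d
        · simp [hc.1, hc.2, Finset.sum_ite_eq, Finset.sum_ite_eq']
        · have hz : ∀ b : Fin n, (if s = t ∧ e = d ∧ b = q then Dcost t d p q * ε else 0) = 0 := by
            intro b; rw [if_neg]; tauto
          simp [hz, hc]
      simp only [step2]
      have step3 : ∀ (s : Fin (T+1)),
          (∑ e : D, if s = t ∧ e = d then Dcost t d p q * ε else 0)
            = if s = t then Dcost t d p q * ε else 0 := by
        intro s
        by_cases hc : s = t
        · simp [hc, Finset.sum_ite_eq, Finset.sum_ite_eq']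
        · have hz : ∀ e : D, (if s = t ∧ e = d then Dcost t d p q * ε else 0) = 0 := by
            intro e; rw [if_neg]; tauto
          simp [hz, hc]
      simp only [step3]
      simp [Finset.sum_ite_eq, Finset.sum_ite_eq']
    have hDYeq : x'.DY = x.DY := rfl
    have hBeq : x'.B = x.B := rfl
    have expand : (∑ s, ∑ e, ∑ b, ∑ a ∈ Iic b, Dcost s e a b * x'.CY s e a b)
        = (∑ s, ∑ e, ∑ b, ∑ a ∈ Iic b, Dcost s e a b * x.CY s e a b)
          + Dcost t d h1 h2 * ε + Dcost t d h1' h2' * ε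
          - Dcost t d h1 h2' * ε - Dcost t d h1' h2 * ε := by
      simp only [hCY, mul_add, mul_sub, Finset.sum_add_distrib, Finset.sum_sub_distrib]
      rw [obj_key h1 h2 hA, obj_key h1' h2' hB, obj_key h1 h2' hC]
      rw [obj_key h1' h2 hD]
    have hcond := hiii t d h1 h1' h2 h2' hh1 hh2 hh3
    have hmul := mul_le_mul_of_nonneg_right hcond hε
    simp only [obj, hDYeq, hBeq, expand]
    linarith
end

section
/- (Uncrossing of barrier flows.) Let x ∈ Q, let t ∈ {0,…,T}, and let g1 ≤ g1' ≤ g2 ≤ g2' in H_B. Let ε ≥ 0 satisfy ε ≤ B(t,g1,g2'), ε ≤ B(t,g1',g2), B(t,g1,g2)+ε ≤ 1 and B(t,g1',g2')+ε ≤ 1. Define x' from x by decreasing the coordinates B(t,g1,g2') and B(t,g1',g2) by ε and increasing the coordinates B(t,g1,g2) and B(t,g1',g2') by ε, leaving all other coordinates unchanged. Then x' ∈ Q; moreover, if condition (ii) holds, then obj(x') ≤ obj(x). -/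
open Finset

/-- uncrossing of barrier flows: decreasing `B(t,g1,g2')` and
`B(t,g1',g2)` by `ε` and increasing `B(t,g1,g2)` and `B(t,g1',g2')` by `ε`
keeps the point in `Q`, and does not increase the objective if
condition (ii) holds. -/
theorem statement_7 (T n m : ℕ) (hT : 1 ≤ T) [NeZero n] [NeZero m]
    (D : Type) [Fintype D] [Nonempty D]
    (Dcost : Fin (T + 1) → D → Fin n → Fin n → ℝ)
    (Dexp : Fin (T + 1) → D → Fin n → Fin m → ℝ)
    (Bcost : Fin (T + 1) → Fin m → Fin m → ℝ)
    (Bexp : Fin (T + 1) → Fin m → ℝ)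
    (hDcost : ∀ t d h1 h2, h1 ≤ h2 → 0 ≤ Dcost t d h1 h2)
    (hDexp : ∀ t d h g, 0 ≤ Dexp t d h g)
    (hBcost : ∀ t g1 g2, g1 ≤ g2 → 0 ≤ Bcost t g1 g2)
    (hBexp : ∀ t g, 0 ≤ Bexp t g)
    (x : DikePoint T n m D) (hx : memQ x)
    (t : Fin (T + 1)) (g1 g1' g2 g2' : Fin m)
    (hg1 : g1 ≤ g1') (hg2 : g1' ≤ g2) (hg3 : g2 ≤ g2')
    (ε : ℝ) (hε : 0 ≤ ε)
    (he1 : ε ≤ x.B t g1 g2') (he2 : ε ≤ x.B t g1' g2)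
    (he3 : x.B t g1 g2 + ε ≤ 1) (he4 : x.B t g1' g2' + ε ≤ 1) :
    let x' : DikePoint T n m D :=
      { CY := x.CY
        B := fun s a b => x.B s a b
          + (if (s, a, b) = (t, g1, g2) then ε else 0)
          + (if (s, a, b) = (t, g1', g2') then ε else 0)
          - (if (s, a, b) = (t, g1, g2') then ε else 0)
          - (if (s, a, b) = (t, g1', g2) then ε else 0)
        DY := x.DY }
    memQ x' ∧ (condII Bcost →
      obj Dcost Dexp Bcost Bexp x' ≤ obj Dcost Dexp Bcost Bexp x) := by
  intro x'
  have hB' : ∀ s a b, x'.B s a b = x.B s a b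
      + (if (s, a, b) = (t, g1, g2) then ε else 0)
      + (if (s, a, b) = (t, g1', g2') then ε else 0)
      - (if (s, a, b) = (t, g1, g2') then ε else 0)
      - (if (s, a, b) = (t, g1', g2) then ε else 0) := fun s a b => rfl
  by_cases hA : ε = 0 ∨ g1 = g1' ∨ g2 = g2'
  · -- degenerate case: x' = x
    have hB0 : x'.B = x.B := by
      funext s a b
      rw [hB']
      rcases hA with h | h | h
      · subst h; simp
      · subst h; ring
      · subst h; ring
    have hxx : x' = x := by
      have hC : x'.CY = x.CY := rfl
      have hD : x'.DY = x.DY := rfl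
      cases hx' : x'
      cases hxe : x
      rw [hx', hxe] at hC hB0 hD
      simp only [] at hC hB0 hD
      subst hC; subst hB0; subst hD; rfl
    rw [hxx]
    exact ⟨hx, fun _ => le_rfl⟩
  · push_neg at hA
    obtain ⟨hε0, h11, h22⟩ := hA
    obtain ⟨hc1, hc2, hc3, hc4, hc5, hc6, hc7, hc8, hc9, hc10, hc11, hc12, hc13⟩ := hx
    have hg12 : g1 ≤ g2 := hg1.trans hg2
    have hg12' : g1 ≤ g2' := hg12.trans hg3
    have hg1'2' : g1' ≤ g2' := hg2.trans hg3
    have ht0 : t ≠ 0 := by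
      intro h0
      rw [h0] at he1
      have hz : x.B 0 g1 g2' = 0 :=
        hc9 g1 g2' (lt_of_le_of_lt (Fin.zero_le g2) (lt_of_le_of_ne hg3 h22))
      rw [hz] at he1
      exact hε0 (le_antisymm he1 hε)
    -- evaluating sums of a single indicator over Iic / Ici
    have hIic : ∀ (s : Fin (T+1)) (g c1 c2 : Fin m),
        (∑ a ∈ Iic g, (if (s, a, g) = (t, c1, c2) then ε else 0))
          = if s = t ∧ g = c2 ∧ c1 ≤ g then ε else 0 := by
      intro s g c1 c2
      by_cases hs : s = t
      · by_cases hg : g = c2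
        · subst hs; subst hg
          simp only [Prod.mk.injEq, true_and, and_true]
          rw [Finset.sum_ite_eq' (Iic g) c1 (fun _ => ε)]
          simp [Finset.mem_Iic]
        · simp [Prod.mk.injEq, hg]
      · simp [Prod.mk.injEq, hs]
    have hIci : ∀ (s : Fin (T+1)) (g c1 c2 : Fin m),
        (∑ b ∈ Ici g, (if (s, g, b) = (t, c1, c2) then ε else 0))
          = if s = t ∧ g = c1 ∧ g ≤ c2 then ε else 0 := by
      intro s g c1 c2
      by_cases hs : s = t
      · by_cases hg : g = c1
        · subst hs; subst hg
          simp only [Prod.mk.injEq, true_and]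
          rw [Finset.sum_ite_eq' (Ici g) c2 (fun _ => ε)]
          simp [Finset.mem_Ici]
        · simp [Prod.mk.injEq, hg]
      · simp [Prod.mk.injEq, hs]
    have key1 : ∀ (s : Fin (T+1)) (g : Fin m),
        (∑ a ∈ Iic g, ((if (s, a, g) = (t, g1, g2) then ε else 0)
          + (if (s, a, g) = (t, g1', g2') then ε else 0)
          - (if (s, a, g) = (t, g1, g2') then ε else 0)
          - (if (s, a, g) = (t, g1', g2) then ε else 0))) = 0 := by
      intro s g
      simp only [Finset.sum_sub_distrib, Finset.sum_add_distrib]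
      rw [hIic s g g1 g2, hIic s g g1' g2', hIic s g g1 g2', hIic s g g1' g2]
      by_cases hs : s = t
      · by_cases hg : g = g2
        · by_cases hg' : g = g2'
          · exact absurd (hg.symm.trans hg') h22
          · subst hg; simp [hs, hg', hg12, hg2]
        · by_cases hg' : g = g2'
          · subst hg'; simp [hs, hg, hg12', hg1'2']
          · simp [hs, hg, hg']
      · simp [hs]
    have key2 : ∀ (s : Fin (T+1)) (g : Fin m),
        (∑ b ∈ Ici g, ((if (s, g, b) = (t, g1, g2) then ε else 0)
          + (if (s, g, b) = (t, g1', g2') then ε else 0)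
          - (if (s, g, b) = (t, g1, g2') then ε else 0)
          - (if (s, g, b) = (t, g1', g2) then ε else 0))) = 0 := by
      intro s g
      simp only [Finset.sum_sub_distrib, Finset.sum_add_distrib]
      rw [hIci s g g1 g2, hIci s g g1' g2', hIci s g g1 g2', hIci s g g1' g2]
      by_cases hs : s = t
      · by_cases hg : g = g1
        · by_cases hg' : g = g1'
          · exact absurd (hg.symm.trans hg') h11
          · subst hg; simp [hs, hg', hg12, hg12']
        · by_cases hg' : g = g1'
          · subst hg'; simp [hs, hg, hg2, hg1'2']
          · simp [hs, hg, hg']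
      · simp [hs]
    have hB'Iic : ∀ (s : Fin (T+1)) (g : Fin m),
        (∑ a ∈ Iic g, x'.B s a g) = ∑ a ∈ Iic g, x.B s a g := by
      intro s g
      have hstep : (∑ a ∈ Iic g, x'.B s a g)
          = ∑ a ∈ Iic g, (x.B s a g + ((if (s, a, g) = (t, g1, g2) then ε else 0)
            + (if (s, a, g) = (t, g1', g2') then ε else 0)
            - (if (s, a, g) = (t, g1, g2') then ε else 0)
            - (if (s, a, g) = (t, g1', g2) then ε else 0))) :=
        Finset.sum_congr rfl (fun a _ => by rw [hB']; ring)
      rw [hstep, Finset.sum_add_distrib, key1 s g, add_zero]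
    have hB'Ici : ∀ (s : Fin (T+1)) (g : Fin m),
        (∑ b ∈ Ici g, x'.B s g b) = ∑ b ∈ Ici g, x.B s g b := by
      intro s g
      have hstep : (∑ b ∈ Ici g, x'.B s g b)
          = ∑ b ∈ Ici g, (x.B s g b + ((if (s, g, b) = (t, g1, g2) then ε else 0)
            + (if (s, g, b) = (t, g1', g2') then ε else 0)
            - (if (s, g, b) = (t, g1, g2') then ε else 0)
            - (if (s, g, b) = (t, g1', g2) then ε else 0))) :=
        Finset.sum_congr rfl (fun b _ => by rw [hB']; ring)
      rw [hstep, Finset.sum_add_distrib, key2 s g, add_zero]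
    -- box constraint for B
    have hbox : ∀ s a b, x'.B s a b ∈ Set.Icc (0:ℝ) 1 := by
      intro s a b
      rw [hB' s a b, Set.mem_Icc]
      by_cases e1 : (s, a, b) = (t, g1, g2)
      · simp only [Prod.mk.injEq] at e1
        obtain ⟨hs, ha, hb⟩ := e1; rw [hs, ha, hb]
        simp only [Prod.mk.injEq, h11, h22, if_pos, if_neg, and_false, false_and,
          and_true, true_and, if_true, ite_false, ite_true, if_false]
        simp [h11, h22]
        constructor
        · linarith [(hc2 t g1 g2).1]
        · linarith
      · by_cases e2 : (s, a, b) = (t, g1', g2')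
        · simp only [Prod.mk.injEq] at e2
          obtain ⟨hs, ha, hb⟩ := e2; rw [hs, ha, hb]
          simp [Prod.mk.injEq, Ne.symm h11, Ne.symm h22]
          constructor
          · linarith [(hc2 t g1' g2').1]
          · linarith
        · by_cases e3 : (s, a, b) = (t, g1, g2')
          · simp only [Prod.mk.injEq] at e3
            obtain ⟨hs, ha, hb⟩ := e3; rw [hs, ha, hb]
            simp [Prod.mk.injEq, h11, Ne.symm h22, h22]
            constructor
            · linarith
            · linarith [(hc2 t g1 g2').2]
          · by_cases e4 : (s, a, b) = (t, g1', g2)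
            · simp only [Prod.mk.injEq] at e4
              obtain ⟨hs, ha, hb⟩ := e4; rw [hs, ha, hb]
              simp [Prod.mk.injEq, Ne.symm h11, h11, h22]
              constructor
              · linarith
              · linarith [(hc2 t g1' g2).2]
            · rw [if_neg e1, if_neg e2, if_neg e3, if_neg e4]
              simpa using (hc2 s a b)
    -- support constraint for B
    have hsupp : ∀ s a b, ¬ a ≤ b → x'.B s a b = 0 := by
      intro s a b hab
      have hne : ∀ (c1 c2 : Fin m), c1 ≤ c2 → (s, a, b) ≠ (t, c1, c2) := by
        intro c1 c2 hc h
        simp only [Prod.mk.injEq] at h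
        obtain ⟨_, ha, hb⟩ := h; subst ha; subst hb
        exact hab hc
      rw [hB', if_neg (hne g1 g2 hg12), if_neg (hne g1' g2' hg1'2'),
        if_neg (hne g1 g2' hg12'), if_neg (hne g1' g2 hg2)]
      simp [hc5 s a b hab]
    -- initial constraints for B
    have hne0 : ∀ (a b c1 c2 : Fin m), ((0 : Fin (T+1)), a, b) ≠ (t, c1, c2) :=
      fun a b c1 c2 h => ht0 (congrArg Prod.fst h).symm
    have hinit1 : x'.B 0 0 0 = 1 := by
      rw [hB', if_neg (hne0 _ _ _ _), if_neg (hne0 _ _ _ _), if_neg (hne0 _ _ _ _),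
        if_neg (hne0 _ _ _ _)]
      simp [hc8]
    have hinit0 : ∀ a b, 0 < b → x'.B 0 a b = 0 := by
      intro a b hb
      rw [hB', if_neg (hne0 _ _ _ _), if_neg (hne0 _ _ _ _), if_neg (hne0 _ _ _ _),
        if_neg (hne0 _ _ _ _)]
      simp [hc9 a b hb]
    have hflow : ∀ (τ : Fin T) (g : Fin m),
        (∑ a ∈ Iic g, x'.B τ.castSucc a g) = ∑ b ∈ Ici g, x'.B τ.succ g b := by
      intro τ g
      rw [hB'Iic, hB'Ici]
      exact hc12 τ g
    have hlink : ∀ s (d : D) (g : Fin m),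
        (∑ a ∈ Iic g, x'.B s a g) = ∑ h : Fin n, x'.DY s d h g := by
      intro s d g
      rw [hB'Iic]
      exact hc13 s d g
    refine ⟨⟨hc1, hbox, hc3, hc4, hsupp, hc6, hc7, hinit1, hinit0, hc10, hc11, hflow, hlink⟩, ?_⟩
    -- objective
    intro hII
    have hle := hII t g1 g1' g2 g2' hg1 hg2 hg3
    have hobj_ite : ∀ (c1 c2 : Fin m), c1 ≤ c2 →
        (∑ s, ∑ b2, ∑ b1 ∈ Iic b2, (Bcost s b1 b2 + Bexp s b2) *
          (if (s, b1, b2) = (t, c1, c2) then ε else 0)) = (Bcost t c1 c2 + Bexp t c2) * ε := by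
      intro c1 c2 hc
      rw [Fintype.sum_eq_single t (fun s hs => Finset.sum_eq_zero fun b2 _ =>
        Finset.sum_eq_zero fun b1 _ => by simp [Prod.mk.injEq, hs])]
      rw [Fintype.sum_eq_single c2 (fun b2 hb2 => Finset.sum_eq_zero fun b1 _ => by
        simp [Prod.mk.injEq, hb2])]
      rw [Finset.sum_eq_single_of_mem c1 (Finset.mem_Iic.2 hc)
        (fun b1 _ hb1 => by simp [Prod.mk.injEq, hb1])]
      simp
    have hBsum : (∑ s, ∑ gg2, ∑ gg1 ∈ Iic gg2, (Bcost s gg1 gg2 + Bexp s gg2) * x'.B s gg1 gg2)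
        = (∑ s, ∑ gg2, ∑ gg1 ∈ Iic gg2, (Bcost s gg1 gg2 + Bexp s gg2) * x.B s gg1 gg2)
          + ((Bcost t g1 g2 + Bexp t g2) * ε + (Bcost t g1' g2' + Bexp t g2') * ε
            - (Bcost t g1 g2' + Bexp t g2') * ε - (Bcost t g1' g2 + Bexp t g2) * ε) := by
      simp only [hB', mul_add, mul_sub, Finset.sum_add_distrib, Finset.sum_sub_distrib]
      rw [hobj_ite g1 g2 hg12, hobj_ite g1' g2' hg1'2', hobj_ite g1 g2' hg12',
        hobj_ite g1' g2 hg2]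
      ring
    show obj Dcost Dexp Bcost Bexp x' ≤ obj Dcost Dexp Bcost Bexp x
    unfold obj
    have hCY : x'.CY = x.CY := rfl
    have hDY : x'.DY = x.DY := rfl
    rw [hCY, hDY, hBsum]
    nlinarith [mul_le_mul_of_nonneg_right hle hε]
end

section
/- (DY reassignment.) Let x ∈ Q, let t ∈ {0,…,T}, d ∈ D, h ≤ h' in H_D and g ≤ g' in H_B. Let ε ≥ 0 satisfy ε ≤ DY(t,d,h',g), ε ≤ DY(t,d,h,g'), DY(t,d,h,g)+ε ≤ 1 and DY(t,d,h',g')+ε ≤ 1. Define x' from x by decreasing the coordinates DY(t,d,h',g) and DY(t,d,h,g') by ε and increasing the coordinates DY(t,d,h,g) and DY(t,d,h',g') by ε, leaving all other coordinates unchanged. Then x' ∈ Q; moreover, if condition (i) holds, then obj(x') ≤ obj(x). -/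
open Finset

private lemma sum_ite_last {m : ℕ} (P Q R : Prop) [Decidable P] [Decidable Q] [Decidable R]
    (c : Fin m) (v : ℝ) :
    ∑ b : Fin m, (if P ∧ Q ∧ R ∧ b = c then v else 0) = if P ∧ Q ∧ R then v else 0 := by
  by_cases hP : P <;> by_cases hQ : Q <;> by_cases hR : R <;>
    simp [hP, hQ, hR, Finset.sum_ite_eq']

private lemma sum_ite_mid {n : ℕ} (P Q R : Prop) [Decidable P] [Decidable Q] [Decidable R]
    (c : Fin n) (v : ℝ) :
    ∑ a : Fin n, (if P ∧ Q ∧ a = c ∧ R then v else 0) = if P ∧ Q ∧ R then v else 0 := by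
  by_cases hP : P <;> by_cases hQ : Q <;> by_cases hR : R <;>
    simp [hP, hQ, hR, Finset.sum_ite_eq']

private lemma quad_sum {T n m : ℕ} {D : Type} [Fintype D] [DecidableEq D]
    (f : Fin (T+1) → D → Fin n → Fin m → ℝ)
    (t0 : Fin (T+1)) (d0 : D) (h0 : Fin n) (g0 : Fin m) (ε : ℝ) :
    (∑ s, ∑ e, ∑ a, ∑ b, f s e a b * (if (s, e, a, b) = (t0, d0, h0, g0) then ε else 0))
      = f t0 d0 h0 g0 * ε := by
  simp [Prod.mk.injEq, mul_ite, mul_zero, ite_and, Finset.sum_ite_eq, Finset.sum_ite_eq']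

/-- DY reassignment: decreasing `DY(t,d,h',g)` and `DY(t,d,h,g')`
by `ε` and increasing `DY(t,d,h,g)` and `DY(t,d,h',g')` by `ε` keeps the point
in `Q`, and does not increase the objective if condition (i) holds. -/
theorem statement_8 (T n m : ℕ) (hT : 1 ≤ T) [NeZero n] [NeZero m]
    (D : Type) [Fintype D] [Nonempty D] [DecidableEq D]
    (Dcost : Fin (T + 1) → D → Fin n → Fin n → ℝ)
    (Dexp : Fin (T + 1) → D → Fin n → Fin m → ℝ)
    (Bcost : Fin (T + 1) → Fin m → Fin m → ℝ)
    (Bexp : Fin (T + 1) → Fin m → ℝ)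
    (hDcost : ∀ t d h1 h2, h1 ≤ h2 → 0 ≤ Dcost t d h1 h2)
    (hDexp : ∀ t d h g, 0 ≤ Dexp t d h g)
    (hBcost : ∀ t g1 g2, g1 ≤ g2 → 0 ≤ Bcost t g1 g2)
    (hBexp : ∀ t g, 0 ≤ Bexp t g)
    (x : DikePoint T n m D) (hx : memQ x)
    (t : Fin (T + 1)) (d : D) (h h' : Fin n) (g g' : Fin m)
    (hh : h ≤ h') (hg : g ≤ g')
    (ε : ℝ) (hε : 0 ≤ ε)
    (he1 : ε ≤ x.DY t d h' g) (he2 : ε ≤ x.DY t d h g')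
    (he3 : x.DY t d h g + ε ≤ 1) (he4 : x.DY t d h' g' + ε ≤ 1) :
    let x' : DikePoint T n m D :=
      { CY := x.CY
        B := x.B
        DY := fun s e a b => x.DY s e a b
          + (if (s, e, a, b) = (t, d, h, g) then ε else 0)
          + (if (s, e, a, b) = (t, d, h', g') then ε else 0)
          - (if (s, e, a, b) = (t, d, h', g) then ε else 0)
          - (if (s, e, a, b) = (t, d, h, g') then ε else 0) }
    memQ x' ∧ (condI Dexp →
      obj Dcost Dexp Bcost Bexp x' ≤ obj Dcost Dexp Bcost Bexp x) := by
  intro x'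
  obtain ⟨hcy, hb, hdy, hcy0, hb0, hcyi, hcyi', hbi, hbi', hcyf, hl1, hbf, hl2⟩ := hx
  have hxD : ∀ s e a b, x'.DY s e a b = x.DY s e a b
      + (if (s, e, a, b) = (t, d, h, g) then ε else 0)
      + (if (s, e, a, b) = (t, d, h', g') then ε else 0)
      - (if (s, e, a, b) = (t, d, h', g) then ε else 0)
      - (if (s, e, a, b) = (t, d, h, g') then ε else 0) := fun _ _ _ _ => rfl
  have hxC : x'.CY = x.CY := rfl
  have hxB : x'.B = x.B := rfl
  have hrow : ∀ s e a, ∑ b : Fin m, x'.DY s e a b = ∑ b : Fin m, x.DY s e a b := by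
    intro s e a
    simp only [hxD]
    rw [Finset.sum_sub_distrib, Finset.sum_sub_distrib, Finset.sum_add_distrib,
        Finset.sum_add_distrib]
    simp only [Prod.mk.injEq, sum_ite_last]
    ring
  have hcol : ∀ s e b, ∑ a : Fin n, x'.DY s e a b = ∑ a : Fin n, x.DY s e a b := by
    intro s e b
    simp only [hxD]
    rw [Finset.sum_sub_distrib, Finset.sum_sub_distrib, Finset.sum_add_distrib,
        Finset.sum_add_distrib]
    simp only [Prod.mk.injEq, sum_ite_mid]
    ring
  have hbox : ∀ s e a b, x'.DY s e a b ∈ Set.Icc (0 : ℝ) 1 := by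
    intro s e a b
    have H0 := hdy s e a b
    have H1 := hdy t d h g
    have H2 := hdy t d h' g'
    have H3 := hdy t d h' g
    have H4 := hdy t d h g'
    simp only [Set.mem_Icc] at H0 H1 H2 H3 H4 ⊢
    obtain ⟨H0a, H0b⟩ := H0
    obtain ⟨H1a, H1b⟩ := H1
    obtain ⟨H2a, H2b⟩ := H2
    obtain ⟨H3a, H3b⟩ := H3
    obtain ⟨H4a, H4b⟩ := H4
    rcases eq_or_ne h h' with rfl | hne
    · constructor <;> linarith
    rcases eq_or_ne g g' with rfl | hge
    · constructor <;> linarith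
    have hne' := hne.symm
    have hge' := hge.symm
    by_cases p1 : (s, e, a, b) = (t, d, h, g)
    · obtain ⟨rfl, rfl, rfl, rfl⟩ : s = t ∧ e = d ∧ a = h ∧ b = g := by
        simpa [Prod.ext_iff] using p1
      simp only [hxD, Prod.mk.injEq]
      simp [hne, hge, hne', hge']
      constructor <;> linarith
    by_cases p2 : (s, e, a, b) = (t, d, h', g')
    · obtain ⟨rfl, rfl, rfl, rfl⟩ : s = t ∧ e = d ∧ a = h' ∧ b = g' := by
        simpa [Prod.ext_iff] using p2
      simp only [hxD, Prod.mk.injEq]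
      simp [hne, hge, hne', hge']
      constructor <;> linarith
    by_cases p3 : (s, e, a, b) = (t, d, h', g)
    · obtain ⟨rfl, rfl, rfl, rfl⟩ : s = t ∧ e = d ∧ a = h' ∧ b = g := by
        simpa [Prod.ext_iff] using p3
      simp only [hxD, Prod.mk.injEq]
      simp [hne, hge, hne', hge']
      constructor <;> linarith
    by_cases p4 : (s, e, a, b) = (t, d, h, g')
    · obtain ⟨rfl, rfl, rfl, rfl⟩ : s = t ∧ e = d ∧ a = h ∧ b = g' := by
        simpa [Prod.ext_iff] using p4
      simp only [hxD, Prod.mk.injEq]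
      simp [hne, hge, hne', hge']
      constructor <;> linarith
    simp only [hxD, p1, p2, p3, p4, if_false]
    constructor <;> linarith
  refine ⟨⟨hcy, hb, hbox, hcy0, hb0, hcyi, hcyi', hbi, hbi', hcyf, ?_, hbf, ?_⟩, ?_⟩
  · intro s e a
    rw [hrow s e a]
    exact hl1 s e a
  · intro s e b
    rw [hcol s e b]
    exact hl2 s e b
  · intro hI
    have hDYsum : (∑ s, ∑ e, ∑ a, ∑ b, Dexp s e a b * x'.DY s e a b)
        = (∑ s, ∑ e, ∑ a, ∑ b, Dexp s e a b * x.DY s e a b)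
          + ε * (Dexp t d h g + Dexp t d h' g' - Dexp t d h' g - Dexp t d h g') := by
      simp only [hxD, mul_add, mul_sub, Finset.sum_add_distrib, Finset.sum_sub_distrib]
      rw [quad_sum Dexp t d h g ε, quad_sum Dexp t d h' g' ε, quad_sum Dexp t d h' g ε,
          quad_sum Dexp t d h g' ε]
      ring
    have hobj : obj Dcost Dexp Bcost Bexp x' = obj Dcost Dexp Bcost Bexp x
        + ε * (Dexp t d h g + Dexp t d h' g' - Dexp t d h' g - Dexp t d h g') := by
      simp only [obj, hxC, hxB]
      rw [hDYsum]
      ring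
    have hcond := hI t d h h' g g' hh hg
    have : 0 ≤ ε * ((Dexp t d h' g + Dexp t d h g')
        - (Dexp t d h g + Dexp t d h' g')) := mul_nonneg hε (by linarith)
    rw [hobj]
    nlinarith
end
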